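/- arXiv:1402.4326 — 8 statements merged into one kernel-verified Lean document; each statement's English description precedes it below -/
import Mathlib

section
/- If A and B are symmetric real matrices with A → B and B → A (i.e., each is obtained from the other by a congruence Pᵀ·P), then A and B have the same number of positive eigenvalues and the same number of negative eigenvalues. -/
open Matrix

lemma keyDiag {m n : Type*} [Fintype m] [Fintype n] [DecidableEq m] [DecidableEq n]
    (a : m → ℝ) (b : n → ℝ) (P : Matrix m n ℝ)
    (h : Pᵀ * Matrix.diagonal a * P = Matrix.diagonal b) :
    Fintype.card {i // 0 < b i} ≤ Fintype.card {i // 0 < a i} := by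
  classical
  let ext : ({j // 0 < b j} → ℝ) →ₗ[ℝ] (n → ℝ) :=
    { toFun := fun c j => if hb : 0 < b j then c ⟨j, hb⟩ else 0
      map_add' := by intro c d; funext j; by_cases hb : 0 < b j <;> simp [hb]
      map_smul' := by intro r c; funext j; by_cases hb : 0 < b j <;> simp [hb] }
  let L : ({j // 0 < b j} → ℝ) →ₗ[ℝ] ({i // 0 < a i} → ℝ) :=
    (LinearMap.funLeft ℝ ℝ Subtype.val).comp ((Matrix.mulVecLin P).comp ext)
  have hinj : Function.Injective L := by
    rw [← LinearMap.ker_eq_bot, LinearMap.ker_eq_bot']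
    intro c hc
    set x : n → ℝ := ext c with hx
    have hxval : ∀ j : n, x j = if hb : 0 < b j then c ⟨j, hb⟩ else 0 := fun j => rfl
    have hPx : ∀ i : m, 0 < a i → (P *ᵥ x) i = 0 := by
      intro i hi
      have := congrFun hc ⟨i, hi⟩
      simpa [L] using this
    have key : x ⬝ᵥ (Matrix.diagonal b) *ᵥ x = (P *ᵥ x) ⬝ᵥ (Matrix.diagonal a) *ᵥ (P *ᵥ x) := by
      rw [← h]
      rw [← Matrix.mulVec_mulVec, ← Matrix.mulVec_mulVec, Matrix.dotProduct_mulVec,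
        Matrix.vecMul_transpose, Matrix.dotProduct_mulVec, Matrix.dotProduct_mulVec]
    have hle : (P *ᵥ x) ⬝ᵥ (Matrix.diagonal a) *ᵥ (P *ᵥ x) ≤ 0 := by
      rw [dotProduct]
      apply Finset.sum_nonpos
      intro i _
      rw [Matrix.mulVec_diagonal]
      rcases lt_trichotomy (a i) 0 with hai | hai | hai
      · nlinarith [sq_nonneg ((P *ᵥ x) i)]
      · simp [hai]
      · simp [hPx i hai]
    have hform : x ⬝ᵥ (Matrix.diagonal b) *ᵥ x = ∑ j : {j // 0 < b j}, b j * (c j)^2 := by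
      have h1 : ∀ i : n, x i * (Matrix.diagonal b *ᵥ x) i = b i * (x i)^2 := by
        intro i; rw [Matrix.mulVec_diagonal]; ring
      rw [dotProduct]
      simp_rw [h1]
      rw [← Finset.sum_filter_of_ne (p := fun i => 0 < b i)
        (by intro i _ hne; by_contra hb; simp [hxval i, hb] at hne)]
      rw [← Finset.sum_subtype_eq_sum_filter, Finset.subtype_univ]
      apply Finset.sum_congr rfl
      intro j _
      simp [hxval j.1, j.2]
    have hsum : ∑ j : {j // 0 < b j}, b j * (c j)^2 ≤ 0 := by
      rw [← hform, key]; exact hle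
    have hzero : ∀ j : {j // 0 < b j}, b j * (c j)^2 = 0 := by
      have hnn : ∀ j ∈ Finset.univ, (0:ℝ) ≤ b j.1 * (c j)^2 := by
        intro j _; exact mul_nonneg j.2.le (sq_nonneg _)
      have := (Finset.sum_eq_zero_iff_of_nonneg hnn).mp
        (le_antisymm hsum (Finset.sum_nonneg hnn))
      intro j; exact this j (Finset.mem_univ j)
    funext j
    have := hzero j
    have hbj := j.2
    simp only [Pi.zero_apply]
    rcases mul_eq_zero.mp this with h' | h'
    · exact absurd h' (ne_of_gt hbj)
    · exact pow_eq_zero_iff two_ne_zero |>.mp h'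
  calc Fintype.card {i // 0 < b i} = Module.finrank ℝ ({j // 0 < b j} → ℝ) := by
        rw [Module.finrank_fintype_fun_eq_card]
      _ ≤ Module.finrank ℝ ({i // 0 < a i} → ℝ) := LinearMap.finrank_le_finrank_of_injective hinj
      _ = Fintype.card {i // 0 < a i} := by rw [Module.finrank_fintype_fun_eq_card]

lemma congrTrans {l m n : Type*} [Fintype l] [Fintype m] [Fintype n]
    (A : Matrix l l ℝ) (B : Matrix m m ℝ) (C : Matrix n n ℝ)
    (P : Matrix l m ℝ) (Q : Matrix m n ℝ)
    (h1 : Pᵀ * A * P = B) (h2 : Qᵀ * B * Q = C) : (P * Q)ᵀ * A * (P * Q) = C := by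
  rw [Matrix.transpose_mul, ← h2, ← h1]
  simp only [Matrix.mul_assoc]

lemma congr_self_diag {m : Type*} [Fintype m] [DecidableEq m]
    (A : Matrix m m ℝ) (hA : A.IsHermitian) :
    ∃ P : Matrix m m ℝ, Pᵀ * A * P = Matrix.diagonal hA.eigenvalues := by
  refine ⟨(hA.eigenvectorUnitary : Matrix m m ℝ), ?_⟩
  have := hA.conjStarAlgAut_star_eigenvectorUnitary
  rw [Unitary.conjStarAlgAut_apply, Unitary.coe_star, star_star] at this
  rw [show Matrix.diagonal (RCLike.ofReal ∘ hA.eigenvalues) = Matrix.diagonal hA.eigenvalues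
    from by congr 1] at this
  have hst : (star (hA.eigenvectorUnitary : Matrix m m ℝ)) =
      (hA.eigenvectorUnitary : Matrix m m ℝ)ᵀ := by
    rw [Matrix.star_eq_conjTranspose]
    ext i j
    simp [Matrix.conjTranspose_apply]
  rw [hst] at this
  convert this using 2

lemma congr_diag_self {m : Type*} [Fintype m] [DecidableEq m]
    (A : Matrix m m ℝ) (hA : A.IsHermitian) :
    ∃ Q : Matrix m m ℝ, Qᵀ * Matrix.diagonal hA.eigenvalues * Q = A := by
  refine ⟨star (hA.eigenvectorUnitary : Matrix m m ℝ), ?_⟩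
  have hst : (star (hA.eigenvectorUnitary : Matrix m m ℝ))ᵀ =
      (hA.eigenvectorUnitary : Matrix m m ℝ) := by
    rw [Matrix.star_eq_conjTranspose]
    ext i j
    simp [Matrix.conjTranspose_apply]
  rw [hst]
  have := hA.spectral_theorem
  have hd : Matrix.diagonal (RCLike.ofReal ∘ hA.eigenvalues) = Matrix.diagonal hA.eigenvalues := by
    congr 1
  rw [hd] at this
  exact this.symm

lemma keyDiagNeg {m n : Type*} [Fintype m] [Fintype n] [DecidableEq m] [DecidableEq n]
    (a : m → ℝ) (b : n → ℝ) (P : Matrix m n ℝ)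
    (h : Pᵀ * Matrix.diagonal a * P = Matrix.diagonal b) :
    Fintype.card {i // b i < 0} ≤ Fintype.card {i // a i < 0} := by
  have h' : Pᵀ * Matrix.diagonal (-a) * P = Matrix.diagonal (-b) := by
    have e1 : Matrix.diagonal (-a) = -Matrix.diagonal a := by
      ext i j; by_cases hij : i = j <;> simp [Matrix.diagonal, hij]
    have e2 : Matrix.diagonal (-b) = -Matrix.diagonal b := by
      ext i j; by_cases hij : i = j <;> simp [Matrix.diagonal, hij]
    rw [e1, e2, Matrix.mul_neg, Matrix.neg_mul, h]
  have := keyDiag (-a) (-b) P h'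
  calc Fintype.card {i // b i < 0} = Fintype.card {i // 0 < (-b) i} :=
        Fintype.card_congr (Equiv.subtypeEquivRight (by intro i; simp))
    _ ≤ Fintype.card {i // 0 < (-a) i} := this
    _ = Fintype.card {i // a i < 0} :=
        Fintype.card_congr (Equiv.subtypeEquivRight (by intro i; simp))

/-- If symmetric real matrices `A` and `B` satisfy `A → B` and `B → A`
(each obtained from the other by a congruence `Pᵀ · P`), then they have the same number of
positive eigenvalues and the same number of negative eigenvalues. -/
theorem stmt2 {m n : Type*} [Fintype m] [Fintype n] [DecidableEq m] [DecidableEq n]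
    (A : Matrix m m ℝ) (B : Matrix n n ℝ)
    (hA : A.IsHermitian) (hB : B.IsHermitian)
    (hAB : ∃ P : Matrix m n ℝ, Pᵀ * A * P = B)
    (hBA : ∃ Q : Matrix n m ℝ, Qᵀ * B * Q = A) :
    Fintype.card {i // 0 < hA.eigenvalues i} = Fintype.card {i // 0 < hB.eigenvalues i} ∧
      Fintype.card {i // hA.eigenvalues i < 0} = Fintype.card {i // hB.eigenvalues i < 0} := by
  obtain ⟨P, hP⟩ := hAB
  obtain ⟨Q, hQ⟩ := hBA
  obtain ⟨SA, hSA⟩ := congr_self_diag A hA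
  obtain ⟨TA, hTA⟩ := congr_diag_self A hA
  obtain ⟨SB, hSB⟩ := congr_self_diag B hB
  obtain ⟨TB, hTB⟩ := congr_diag_self B hB
  -- D_A → D_B
  have h1 : ∃ R : Matrix m n ℝ, Rᵀ * Matrix.diagonal hA.eigenvalues * R
      = Matrix.diagonal hB.eigenvalues :=
    ⟨TA * (P * SB), congrTrans _ _ _ _ _ hTA (congrTrans _ _ _ _ _ hP hSB)⟩
  have h2 : ∃ R : Matrix n m ℝ, Rᵀ * Matrix.diagonal hB.eigenvalues * R
      = Matrix.diagonal hA.eigenvalues :=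
    ⟨TB * (Q * SA), congrTrans _ _ _ _ _ hTB (congrTrans _ _ _ _ _ hQ hSA)⟩
  obtain ⟨R1, hR1⟩ := h1
  obtain ⟨R2, hR2⟩ := h2
  exact ⟨le_antisymm (keyDiag _ _ _ hR2) (keyDiag _ _ _ hR1),
    le_antisymm (keyDiagNeg _ _ _ hR2) (keyDiagNeg _ _ _ hR1)⟩
end

section
/- Let A = [[A₁₁, A₁₂, 0],[A₂₁, A₂₂, A₂₃],[0, A₃₂, A₃₃]] be a symmetric n×n real matrix with A₁₁ of size k×k and A₂₂ of size m×m. Suppose that for every vector x in the kernel of the block-diagonal matrix diag(A₁₁, A₃₃), we have [A₂₁, A₂₃] x = 0. Then there exists a k×m real matrix Y with A₁₁ Y = A₁₂, and for any such Y, the matrix A is related by mutual congruence-arrows (A ↔ B, i.e., A → B and B → A) to the block diagonal sum [[A₁₁, A₁₂],[A₂₁, Yᵀ A₁₁ Y]] ⊕ [[A₂₂ − Yᵀ A₁₁ Y, A₂₃],[A₃₂, A₃₃]]. -/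
open Matrix

lemma symm_solvable {k : ℕ} (M : Matrix (Fin k) (Fin k) ℝ) (hM : Mᵀ = M)
    (c : Fin k → ℝ) (hc : ∀ x : Fin k → ℝ, M *ᵥ x = 0 → c ⬝ᵥ x = 0) :
    ∃ y : Fin k → ℝ, M *ᵥ y = c := by
  let W : Submodule ℝ (EuclideanSpace ℝ (Fin k)) := LinearMap.range (toEuclideanLin M)
  have hW : ((WithLp.equiv 2 (Fin k → ℝ)).symm c) ∈ W := by
    rw [← Submodule.orthogonal_orthogonal W]
    intro z hz
    set zf : Fin k → ℝ := (WithLp.equiv 2 (Fin k → ℝ)) z with hzf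
    have key : ∀ v : Fin k → ℝ, (zf ᵥ* M) ⬝ᵥ v = 0 := by
      intro v
      have h1 := hz (toEuclideanLin M ((WithLp.equiv 2 (Fin k → ℝ)).symm v)) ⟨_, rfl⟩
      rw [WithLp.equiv_symm_apply, toEuclideanLin_apply_piLp_toLp] at h1
      rw [← dotProduct_mulVec, dotProduct_comm]
      simpa [hzf, PiLp.inner_apply, dotProduct, mul_comm] using h1
    have hvm : zf ᵥ* M = 0 := by
      ext j
      simpa using key (Pi.single j 1)
    have hz0 : M *ᵥ zf = 0 := by
      rw [← hM, mulVec_transpose, hvm]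
    have hdot := hc zf hz0
    simpa [hzf, PiLp.inner_apply, dotProduct, mul_comm] using hdot
  obtain ⟨y, hy⟩ := hW
  exact ⟨(WithLp.equiv 2 (Fin k → ℝ)) y, congrArg (WithLp.equiv 2 (Fin k → ℝ)) hy⟩

set_option maxHeartbeats 2000000 in
/-- Let `A = [[A₁₁, A₁₂, 0],[A₂₁, A₂₂, A₂₃],[0, A₃₂, A₃₃]]` be symmetric with
`A₁₁` of size `k×k` and `A₂₂` of size `m×m`.  If every `x ∈ ker (diag(A₁₁, A₃₃))` satisfies
`[A₂₁, A₂₃] x = 0`, then there exists `Y` with `A₁₁ Y = A₁₂`, and for every such `Y`,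
`A ↔ [[A₁₁, A₁₂],[A₂₁, Yᵀ A₁₁ Y]] ⊕ [[A₂₂ − Yᵀ A₁₁ Y, A₂₃],[A₃₂, A₃₃]]`. -/
theorem stmt6 {k m r : ℕ}
    (A₁₁ : Matrix (Fin k) (Fin k) ℝ) (A₁₂ : Matrix (Fin k) (Fin m) ℝ)
    (A₂₁ : Matrix (Fin m) (Fin k) ℝ) (A₂₂ : Matrix (Fin m) (Fin m) ℝ)
    (A₂₃ : Matrix (Fin m) (Fin r) ℝ) (A₃₂ : Matrix (Fin r) (Fin m) ℝ)
    (A₃₃ : Matrix (Fin r) (Fin r) ℝ)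
    (h11 : A₁₁ᵀ = A₁₁) (h22 : A₂₂ᵀ = A₂₂) (h33 : A₃₃ᵀ = A₃₃)
    (h21 : A₂₁ = A₁₂ᵀ) (h32 : A₃₂ = A₂₃ᵀ)
    (hker : ∀ x : Fin k ⊕ Fin r → ℝ,
      (fromBlocks A₁₁ 0 0 A₃₃).mulVec x = 0 → (fromCols A₂₁ A₂₃).mulVec x = 0) :
    (∃ Y : Matrix (Fin k) (Fin m) ℝ, A₁₁ * Y = A₁₂) ∧
    ∀ Y : Matrix (Fin k) (Fin m) ℝ, A₁₁ * Y = A₁₂ →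
      (∃ P : Matrix (Fin k ⊕ (Fin m ⊕ Fin r)) ((Fin k ⊕ Fin m) ⊕ (Fin m ⊕ Fin r)) ℝ,
          Pᵀ * (fromBlocks A₁₁ (fromCols A₁₂ 0) (fromRows A₂₁ 0)
                  (fromBlocks A₂₂ A₂₃ A₃₂ A₃₃)) * P =
            fromBlocks (fromBlocks A₁₁ A₁₂ A₂₁ (Yᵀ * A₁₁ * Y)) 0 0
              (fromBlocks (A₂₂ - Yᵀ * A₁₁ * Y) A₂₃ A₃₂ A₃₃)) ∧
      (∃ Q : Matrix ((Fin k ⊕ Fin m) ⊕ (Fin m ⊕ Fin r)) (Fin k ⊕ (Fin m ⊕ Fin r)) ℝ,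
          Qᵀ * (fromBlocks (fromBlocks A₁₁ A₁₂ A₂₁ (Yᵀ * A₁₁ * Y)) 0 0
                  (fromBlocks (A₂₂ - Yᵀ * A₁₁ * Y) A₂₃ A₃₂ A₃₃)) * Q =
            fromBlocks A₁₁ (fromCols A₁₂ 0) (fromRows A₂₁ 0)
              (fromBlocks A₂₂ A₂₃ A₃₂ A₃₃)) := by
  constructor
  · -- existence of Y
    have hcol : ∀ j : Fin m, ∃ y : Fin k → ℝ, A₁₁ *ᵥ y = fun i => A₁₂ i j := by
      intro j
      apply symm_solvable A₁₁ h11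
      intro x hx
      have h0 : (fromBlocks A₁₁ 0 0 A₃₃).mulVec (Sum.elim x 0) = 0 := by
        rw [fromBlocks_mulVec]
        simp [hx]
      have h1 := hker (Sum.elim x 0) h0
      rw [fromCols_mulVec_sumElim] at h1
      simp only [mulVec_zero, add_zero] at h1
      have h2 := congrFun h1 j
      simp only [h21, Pi.zero_apply, mulVec, dotProduct] at h2
      simpa [dotProduct, transpose_apply, mul_comm] using h2
    choose y hy using hcol
    refine ⟨Matrix.of (fun i j => y j i), ?_⟩
    ext i j
    have := congrFun (hy j) i
    simpa [mul_apply, mulVec, dotProduct] using this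
  · intro Y hY
    have h21' : A₂₁ = Yᵀ * A₁₁ := by rw [h21, ← hY, transpose_mul, h11]
    constructor
    · refine ⟨fromBlocks (fromCols 1 Y) (fromCols (-Y) 0) 0 1, ?_⟩
      simp only [fromBlocks_transpose, transpose_fromCols, transpose_zero, transpose_one,
        transpose_neg, fromBlocks_multiply, fromRows_mul, mul_fromCols,
        fromRows_mul_fromCols, fromCols_mul_fromRows, fromCols_mul_fromBlocks,
        fromBlocks_mul_fromRows, Matrix.mul_zero, Matrix.zero_mul, Matrix.mul_one,
        Matrix.one_mul, add_zero, zero_add, Matrix.mul_neg, Matrix.neg_mul, neg_neg,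
        hY, h21']
      have e1 : Yᵀ * A₁₂ = Yᵀ * A₁₁ * Y := by rw [← hY, Matrix.mul_assoc]
      rw [e1]
      ext i j
      rcases i with i | i | i <;> rcases j with (j | j) | j | j <;>
        (try rcases i with i | i) <;> (try rcases j with j | j) <;>
        (try simp [fromBlocks, mul_apply, sub_eq_add_neg]) <;>
        ring
    · refine ⟨fromBlocks (fromRows 1 0) (fromRows 0 (fromCols 1 0)) 0 1, ?_⟩
      simp only [fromBlocks_transpose, transpose_fromCols, transpose_fromRows, transpose_zero,
        transpose_one, fromBlocks_multiply, fromRows_mul, mul_fromCols,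
        fromRows_mul_fromCols, fromCols_mul_fromRows, fromCols_mul_fromBlocks,
        fromBlocks_mul_fromRows, Matrix.mul_zero, Matrix.zero_mul, Matrix.mul_one,
        Matrix.one_mul, add_zero, zero_add, hY, h21']
      ext i j
      rcases i with i | i | i <;> rcases j with j | j | j <;>
        (try rcases i with i | i) <;> (try rcases j with j | j) <;>
        (try simp [fromBlocks, mul_apply, sub_eq_add_neg]) <;>
        ring
end

section
/- Let A = [[A₁₁, A₁₂, 0],[A₂₁, A₂₂, A₂₃],[0, A₃₂, A₃₃]] be a symmetric n×n real matrix with A₁₁ of size k×k and A₂₂ of size m×m. Then at least one of the following holds: (i) there exists a k×m real matrix Y such that A ↔ [[A₁₁, A₁₂],[A₂₁, Yᵀ A₁₁ Y]] ⊕ [[A₂₂ − Yᵀ A₁₁ Y, A₂₃],[A₃₂, A₃₃]]; or (ii) there exists a nonzero vector z ∈ ℝ^m such that A ↔ [[0, 0, zᵀ, 0],[0, A₁₁, A₁₂, 0],[z, A₂₁, A₂₂, A₂₃],[0, 0, A₃₂, A₃₃]]. -/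
open Matrix

private lemma solv_aux {k : ℕ} (A : Matrix (Fin k) (Fin k) ℝ) (hA : Aᵀ = A) (b : Fin k → ℝ)
    (h : ∀ w, A.mulVec w = 0 → b ⬝ᵥ w = 0) : ∃ x, A.mulVec x = b := by
  by_contra hb
  push_neg at hb
  have hbmem : b ∉ LinearMap.range A.mulVecLin := by
    intro hmem
    obtain ⟨x, hx⟩ := hmem
    exact hb x (by simpa using hx)
  obtain ⟨f, hfb, hmap⟩ :=
    (LinearMap.range A.mulVecLin).exists_dual_map_eq_bot_of_notMem hbmem inferInstance
  set w : Fin k → ℝ := fun i => f (Pi.single i 1) with hw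
  have hfw : ∀ v : Fin k → ℝ, f v = v ⬝ᵥ w := by
    intro v
    have hv : v = ∑ i, v i • (Pi.single i 1 : Fin k → ℝ) := by
      funext j
      simp [Pi.single_apply]
    conv_lhs => rw [hv]
    rw [map_sum]
    simp only [_root_.map_smul, smul_eq_mul]
    rfl
  have h0 : ∀ v, (A.mulVec v) ⬝ᵥ w = 0 := by
    intro v
    have hmem : A.mulVec v ∈ LinearMap.range A.mulVecLin := ⟨v, by simp⟩
    have : f (A.mulVec v) ∈ (LinearMap.range A.mulVecLin).map f := ⟨_, hmem, rfl⟩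
    rw [hmap, Submodule.mem_bot] at this
    rw [← hfw]; exact this
  have hvm : w ᵥ* A = 0 := by
    have := h0 (w ᵥ* A)
    rwa [dotProduct_comm, dotProduct_mulVec, dotProduct_self_eq_zero] at this
  have hAw : A.mulVec w = 0 := by
    rw [← hA, mulVec_transpose]; exact hvm
  have := h w hAw
  rw [hfw] at hfb
  exact hfb this

/-- For a symmetric matrix `A = [[A₁₁, A₁₂, 0],[A₂₁, A₂₂, A₂₃],[0, A₃₂, A₃₃]]`
(`A₁₁` of size `k×k`, `A₂₂` of size `m×m`), either (i) there is a `k×m` matrix `Y` with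
`A ↔ [[A₁₁, A₁₂],[A₂₁, Yᵀ A₁₁ Y]] ⊕ [[A₂₂ − Yᵀ A₁₁ Y, A₂₃],[A₃₂, A₃₃]]`, or (ii) there is a
nonzero `z ∈ ℝᵐ` with `A ↔ [[0,0,zᵀ,0],[0,A₁₁,A₁₂,0],[z,A₂₁,A₂₂,A₂₃],[0,0,A₃₂,A₃₃]]`. -/
theorem stmt7 {k m r : ℕ}
    (A₁₁ : Matrix (Fin k) (Fin k) ℝ) (A₁₂ : Matrix (Fin k) (Fin m) ℝ)
    (A₂₁ : Matrix (Fin m) (Fin k) ℝ) (A₂₂ : Matrix (Fin m) (Fin m) ℝ)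
    (A₂₃ : Matrix (Fin m) (Fin r) ℝ) (A₃₂ : Matrix (Fin r) (Fin m) ℝ)
    (A₃₃ : Matrix (Fin r) (Fin r) ℝ)
    (h11 : A₁₁ᵀ = A₁₁) (h22 : A₂₂ᵀ = A₂₂) (h33 : A₃₃ᵀ = A₃₃)
    (h21 : A₂₁ = A₁₂ᵀ) (h32 : A₃₂ = A₂₃ᵀ) :
    (∃ Y : Matrix (Fin k) (Fin m) ℝ,
      (∃ P : Matrix (Fin k ⊕ (Fin m ⊕ Fin r)) ((Fin k ⊕ Fin m) ⊕ (Fin m ⊕ Fin r)) ℝ,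
          Pᵀ * (fromBlocks A₁₁ (fromCols A₁₂ 0) (fromRows A₂₁ 0)
                  (fromBlocks A₂₂ A₂₃ A₃₂ A₃₃)) * P =
            fromBlocks (fromBlocks A₁₁ A₁₂ A₂₁ (Yᵀ * A₁₁ * Y)) 0 0
              (fromBlocks (A₂₂ - Yᵀ * A₁₁ * Y) A₂₃ A₃₂ A₃₃)) ∧
      (∃ Q : Matrix ((Fin k ⊕ Fin m) ⊕ (Fin m ⊕ Fin r)) (Fin k ⊕ (Fin m ⊕ Fin r)) ℝ,
          Qᵀ * (fromBlocks (fromBlocks A₁₁ A₁₂ A₂₁ (Yᵀ * A₁₁ * Y)) 0 0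
                  (fromBlocks (A₂₂ - Yᵀ * A₁₁ * Y) A₂₃ A₃₂ A₃₃)) * Q =
            fromBlocks A₁₁ (fromCols A₁₂ 0) (fromRows A₂₁ 0)
              (fromBlocks A₂₂ A₂₃ A₃₂ A₃₃))) ∨
    (∃ z : Fin m → ℝ, z ≠ 0 ∧
      (∃ P : Matrix (Fin k ⊕ (Fin m ⊕ Fin r)) (Fin 1 ⊕ (Fin k ⊕ (Fin m ⊕ Fin r))) ℝ,
          Pᵀ * (fromBlocks A₁₁ (fromCols A₁₂ 0) (fromRows A₂₁ 0)
                  (fromBlocks A₂₂ A₂₃ A₃₂ A₃₃)) * P =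
            fromBlocks 0
              (fromCols 0 (fromCols (Matrix.of fun (_ : Fin 1) j => z j) 0))
              (fromRows 0 (fromRows (Matrix.of fun j (_ : Fin 1) => z j) 0))
              (fromBlocks A₁₁ (fromCols A₁₂ 0) (fromRows A₂₁ 0)
                (fromBlocks A₂₂ A₂₃ A₃₂ A₃₃))) ∧
      (∃ Q : Matrix (Fin 1 ⊕ (Fin k ⊕ (Fin m ⊕ Fin r))) (Fin k ⊕ (Fin m ⊕ Fin r)) ℝ,
          Qᵀ * (fromBlocks 0
              (fromCols 0 (fromCols (Matrix.of fun (_ : Fin 1) j => z j) 0))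
              (fromRows 0 (fromRows (Matrix.of fun j (_ : Fin 1) => z j) 0))
              (fromBlocks A₁₁ (fromCols A₁₂ 0) (fromRows A₂₁ 0)
                (fromBlocks A₂₂ A₂₃ A₃₂ A₃₃))) * Q =
            fromBlocks A₁₁ (fromCols A₁₂ 0) (fromRows A₂₁ 0)
              (fromBlocks A₂₂ A₂₃ A₃₂ A₃₃))) := by
  classical
  set X : Matrix (Fin k ⊕ (Fin m ⊕ Fin r)) (Fin k ⊕ (Fin m ⊕ Fin r)) ℝ :=
    fromBlocks A₁₁ (fromCols A₁₂ 0) (fromRows A₂₁ 0) (fromBlocks A₂₂ A₂₃ A₃₂ A₃₃) with hX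
  by_cases hc : ∀ w : Fin k → ℝ, A₁₁.mulVec w = 0 → A₂₁.mulVec w = 0
  · -- Case (i): A₁₁ Y = A₁₂ is solvable
    left
    have hsolv : ∀ j : Fin m, ∃ x : Fin k → ℝ, A₁₁.mulVec x = fun i => A₁₂ i j := by
      intro j
      apply solv_aux A₁₁ h11
      intro w hw
      have h2 := hc w hw
      have := congrFun h2 j
      simpa [mulVec, dotProduct, h21, transpose_apply, mul_comm] using this
    choose Ycol hYcol using hsolv
    set Y : Matrix (Fin k) (Fin m) ℝ := Matrix.of fun i j => Ycol j i with hYdef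
    have hY : A₁₁ * Y = A₁₂ := by
      ext i j
      have := congrFun (hYcol j) i
      simpa [mul_apply, mulVec, dotProduct, hYdef] using this
    have hYA : Yᵀ * A₁₁ = A₂₁ := by
      rw [h21, ← hY, transpose_mul, h11]
    have hYA2 : Yᵀ * A₁₂ = A₂₁ * Y := by
      rw [← hY, ← Matrix.mul_assoc, hYA]
    refine ⟨Y, ?_, ?_⟩
    · -- P direction
      refine ⟨fromBlocks (fromCols 1 Y) (fromCols (-Y) 0) 0 1, ?_⟩
      rw [hX]
      simp only [fromBlocks_transpose, transpose_fromCols, transpose_one, transpose_zero,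
        transpose_neg, fromBlocks_multiply, fromRows_mul, mul_fromCols,
        fromCols_mul_fromBlocks, fromBlocks_mul_fromRows, fromCols_mul_fromRows,
        Matrix.mul_one, Matrix.one_mul, Matrix.mul_zero, Matrix.zero_mul, add_zero, zero_add,
        Matrix.neg_mul, Matrix.mul_neg, hY, hYA, hYA2]
      have hcancel : (-A₂₁).fromRows (0 : Matrix (Fin r) (Fin k) ℝ) + A₂₁.fromRows 0 = 0 := by
        ext i j
        rcases i with i | i <;> simp
      rw [hcancel]
      ext i j
      rcases i with (i | i) | (i | i) <;> rcases j with (j | j) | (j | j) <;>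
        simp [fromBlocks_apply₁₁, fromBlocks_apply₁₂, fromBlocks_apply₂₁, fromBlocks_apply₂₂,
          fromRows_apply_inl, fromRows_apply_inr, fromCols_apply_inl, fromCols_apply_inr] <;> ring
    · -- Q direction
      refine ⟨fromBlocks (fromRows 1 0) (fromRows (fromCols Y 0) 0) 0 1, ?_⟩
      rw [hX]
      simp only [fromBlocks_transpose, transpose_fromRows, transpose_fromCols, transpose_one,
        transpose_zero, fromBlocks_multiply, fromRows_mul, mul_fromCols,
        fromCols_mul_fromBlocks, fromBlocks_mul_fromRows, fromCols_mul_fromRows,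
        Matrix.mul_one, Matrix.one_mul, Matrix.mul_zero, Matrix.zero_mul, add_zero, zero_add,
        hY, hYA, hYA2]
      ext i j
      rcases i with i | i | i <;> rcases j with j | j | j <;>
        simp [fromBlocks_apply₁₁, fromBlocks_apply₁₂, fromBlocks_apply₂₁, fromBlocks_apply₂₂,
          fromRows_apply_inl, fromRows_apply_inr, fromCols_apply_inl, fromCols_apply_inr]
  · -- Case (ii)
    right
    push_neg at hc
    obtain ⟨w, hw0, hwz⟩ := hc
    set z : Fin m → ℝ := A₂₁.mulVec w with hz
    set v : Fin k ⊕ (Fin m ⊕ Fin r) → ℝ := Sum.elim w 0 with hv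
    set C : Matrix (Fin k ⊕ (Fin m ⊕ Fin r)) (Fin 1) ℝ := Matrix.of fun i _ => v i with hC
    set Z : Matrix (Fin k ⊕ (Fin m ⊕ Fin r)) (Fin 1) ℝ :=
      fromRows 0 (fromRows (Matrix.of fun j (_ : Fin 1) => z j) 0) with hZ
    have hXsymm : Xᵀ = X := by
      rw [hX]
      simp [fromBlocks_transpose, transpose_fromCols, transpose_fromRows, h11, h22, h33,
        h21, h32, transpose_transpose]
    have hXC : X * C = Z := by
      ext i j
      rcases i with i | i
      · simp only [hX, hC, hZ, mul_apply, fromBlocks_apply₁₁, fromBlocks_apply₁₂,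
          Fintype.sum_sum_type]
        have := congrFun hw0 i
        simp only [mulVec, dotProduct, Pi.zero_apply] at this
        simpa [hv, fromRows_apply_inl, Matrix.of_apply] using this
      · rcases i with i | i
        · simp only [hX, hC, hZ, mul_apply, fromBlocks_apply₂₁, fromBlocks_apply₂₂,
            Fintype.sum_sum_type]
          simp [hv, hz, mulVec, dotProduct, fromRows_apply_inl]
        · simp only [hX, hC, hZ, mul_apply, fromBlocks_apply₂₁, fromBlocks_apply₂₂,
            Fintype.sum_sum_type]
          simp [hv, fromRows_apply_inr]
    have hCZ : Cᵀ * Z = 0 := by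
      ext i j
      simp [hC, hZ, hv, mul_apply, Fintype.sum_sum_type]
    have hCX : Cᵀ * X = Zᵀ := by
      have : (X * C)ᵀ = Zᵀ := by rw [hXC]
      rwa [transpose_mul, hXsymm] at this
    refine ⟨z, ?_, ?_, ?_⟩
    · intro h0
      exact hwz h0
    · refine ⟨fromCols C 1, ?_⟩
      have key : (fromCols C 1)ᵀ * X * fromCols C 1 = fromBlocks (Cᵀ * X * C) (Cᵀ * X) (X * C) X := by
        rw [transpose_fromCols, transpose_one, fromRows_mul, fromRows_mul,
          Matrix.one_mul, mul_fromCols, mul_fromCols, Matrix.mul_one, Matrix.mul_one,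
          fromRows_fromCols_eq_fromBlocks]
      rw [key, hXC, hCX]
      have hZC : Zᵀ * C = 0 := by
        have := congrArg transpose hCZ
        rwa [transpose_mul, transpose_transpose, transpose_zero] at this
      have hZT : Zᵀ = fromCols 0 (fromCols (Matrix.of fun (_ : Fin 1) j => z j) 0) := by
        have ht : (Matrix.of fun j (_ : Fin 1) => z j)ᵀ = Matrix.of fun (_ : Fin 1) j => z j := by
          ext i j; rfl
        simp only [hZ, transpose_fromRows, transpose_zero, ht]
      rw [hZC, hZT]
    · refine ⟨fromRows 0 1, ?_⟩
      rw [transpose_fromRows, transpose_zero, transpose_one]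
      simp [fromCols_mul_fromBlocks, fromCols_mul_fromRows]
end

section
/- Let A = [[A₁₁, A₁₂, 0],[A₂₁, a₂₂, A₂₃],[0, A₃₂, A₃₃]] be a symmetric n×n real matrix, where A₁₁ is k×k, A₃₃ is (n−k−1)×(n−k−1), and a₂₂ is a scalar. Then at least one of the following holds: (i) there exists x ∈ ℝ^k such that A ↔ [[A₁₁, A₁₂],[A₂₁, xᵀ A₁₁ x]] ⊕ [[a₂₂ − xᵀ A₁₁ x, A₂₃],[A₃₂, A₃₃]]; or (ii) A ↔ A₁₁ ⊕ A₃₃ ⊕ H, where H = [[0,1],[1,0]]. -/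
open Matrix

lemma key {k : ℕ} (A : Matrix (Fin k) (Fin k) ℝ) (hA : Aᵀ = A) (b : Fin k → ℝ)
    (h : ¬ ∃ x, A.mulVec x = b) : ∃ v, A.mulVec v = 0 ∧ v ⬝ᵥ b ≠ 0 := by
  by_contra hc
  push_neg at hc
  apply h
  have hinner : ∀ u w : EuclideanSpace ℝ (Fin k), (inner ℝ u w : ℝ) = u ⬝ᵥ w := by
    intro u w
    simp [PiLp.inner_apply, dotProduct, RCLike.inner_apply, mul_comm]
  let T : EuclideanSpace ℝ (Fin k) →ₗ[ℝ] EuclideanSpace ℝ (Fin k) := Matrix.toEuclideanLin A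
  let b' : EuclideanSpace ℝ (Fin k) := WithLp.toLp 2 b
  have hb : b' ∈ LinearMap.range T := by
    rw [← Submodule.orthogonal_orthogonal (LinearMap.range T)]
    rw [Submodule.mem_orthogonal]
    intro v hv
    have hAv : A.mulVec v = 0 := by
      have h1 : (A.mulVec v) ⬝ᵥ (A.mulVec v) = 0 := by
        have h0 := hv (T (WithLp.toLp 2 (A.mulVec v))) (LinearMap.mem_range_self _ _)
        rw [hinner] at h0
        have h2 : (T (WithLp.toLp 2 (A.mulVec v))) ⬝ᵥ v = A.mulVec v ⬝ᵥ A.mulVec v := by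
          show (A.mulVec (A.mulVec v)) ⬝ᵥ v = _
          rw [dotProduct_comm, dotProduct_mulVec, ← mulVec_transpose, hA]
        rw [h2] at h0
        exact h0
      rwa [dotProduct_self_eq_zero] at h1
    rw [hinner]
    exact hc v hAv
  obtain ⟨x, hx⟩ := hb
  exact ⟨x, congrArg WithLp.ofLp hx⟩

set_option maxHeartbeats 2000000 in
/-- For a symmetric matrix `A = [[A₁₁, A₁₂, 0],[A₂₁, a₂₂, A₂₃],[0, A₃₂, A₃₃]]`
with scalar middle entry `a₂₂`, either (i) there is `x ∈ ℝᵏ` with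
`A ↔ [[A₁₁, A₁₂],[A₂₁, xᵀ A₁₁ x]] ⊕ [[a₂₂ − xᵀ A₁₁ x, A₂₃],[A₃₂, A₃₃]]`, or
(ii) `A ↔ A₁₁ ⊕ A₃₃ ⊕ H` with `H = [[0,1],[1,0]]`. -/
theorem stmt8 {k r : ℕ}
    (A₁₁ : Matrix (Fin k) (Fin k) ℝ) (A₁₂ : Matrix (Fin k) (Fin 1) ℝ)
    (A₂₁ : Matrix (Fin 1) (Fin k) ℝ) (a₂₂ : ℝ)
    (A₂₃ : Matrix (Fin 1) (Fin r) ℝ) (A₃₂ : Matrix (Fin r) (Fin 1) ℝ)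
    (A₃₃ : Matrix (Fin r) (Fin r) ℝ)
    (h11 : A₁₁ᵀ = A₁₁) (h33 : A₃₃ᵀ = A₃₃)
    (h21 : A₂₁ = A₁₂ᵀ) (h32 : A₃₂ = A₂₃ᵀ) :
    (∃ x : Fin k → ℝ,
      (∃ P : Matrix (Fin k ⊕ (Fin 1 ⊕ Fin r)) ((Fin k ⊕ Fin 1) ⊕ (Fin 1 ⊕ Fin r)) ℝ,
          Pᵀ * (fromBlocks A₁₁ (fromCols A₁₂ 0) (fromRows A₂₁ 0)
                  (fromBlocks (!![a₂₂]) A₂₃ A₃₂ A₃₃)) * P =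
            fromBlocks (fromBlocks A₁₁ A₁₂ A₂₁ (!![x ⬝ᵥ A₁₁.mulVec x])) 0 0
              (fromBlocks (!![a₂₂ - x ⬝ᵥ A₁₁.mulVec x]) A₂₃ A₃₂ A₃₃)) ∧
      (∃ Q : Matrix ((Fin k ⊕ Fin 1) ⊕ (Fin 1 ⊕ Fin r)) (Fin k ⊕ (Fin 1 ⊕ Fin r)) ℝ,
          Qᵀ * (fromBlocks (fromBlocks A₁₁ A₁₂ A₂₁ (!![x ⬝ᵥ A₁₁.mulVec x])) 0 0
                  (fromBlocks (!![a₂₂ - x ⬝ᵥ A₁₁.mulVec x]) A₂₃ A₃₂ A₃₃)) * Q =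
            fromBlocks A₁₁ (fromCols A₁₂ 0) (fromRows A₂₁ 0)
              (fromBlocks (!![a₂₂]) A₂₃ A₃₂ A₃₃))) ∨
    ((∃ P : Matrix (Fin k ⊕ (Fin 1 ⊕ Fin r)) ((Fin k ⊕ Fin r) ⊕ Fin 2) ℝ,
          Pᵀ * (fromBlocks A₁₁ (fromCols A₁₂ 0) (fromRows A₂₁ 0)
                  (fromBlocks (!![a₂₂]) A₂₃ A₃₂ A₃₃)) * P =
            fromBlocks (fromBlocks A₁₁ 0 0 A₃₃) 0 0 (!![0, 1; 1, 0])) ∧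
      (∃ Q : Matrix ((Fin k ⊕ Fin r) ⊕ Fin 2) (Fin k ⊕ (Fin 1 ⊕ Fin r)) ℝ,
          Qᵀ * (fromBlocks (fromBlocks A₁₁ 0 0 A₃₃) 0 0 (!![0, 1; 1, 0])) * Q =
            fromBlocks A₁₁ (fromCols A₁₂ 0) (fromRows A₂₁ 0)
              (fromBlocks (!![a₂₂]) A₂₃ A₃₂ A₃₃))) := by
  have h11' : ∀ i j, A₁₁ j i = A₁₁ i j := fun i j => congrFun (congrFun h11 i) j
  by_cases hx : ∃ x : Fin k → ℝ, A₁₁.mulVec x = fun i => A₁₂ i 0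
  · left
    obtain ⟨x, hx⟩ := hx
    have hx' : ∀ i, (∑ j, A₁₁ i j * x j) = A₁₂ i 0 := fun i => congrFun hx i
    have hx'' : ∀ i, (∑ j, A₁₁ j i * x j) = A₁₂ i 0 := by
      intro i; rw [← hx' i]; exact Finset.sum_congr rfl fun j _ => by rw [h11']
    have hA21 : ∀ i, A₂₁ 0 i = A₁₂ i 0 := fun i => by rw [h21]; rfl
    have hxA : ∀ i, (∑ j, x j * A₁₁ i j) = A₁₂ i 0 := fun i => by
      rw [← hx' i]; exact Finset.sum_congr rfl fun j _ => mul_comm _ _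
    refine ⟨x, ⟨?_, ?_⟩, ⟨?_, ?_⟩⟩
    · exact Matrix.of fun p q =>
        match p, q with
        | Sum.inl i, Sum.inl (Sum.inl j) => if i = j then (1:ℝ) else 0
        | Sum.inl i, Sum.inl (Sum.inr _) => x i
        | Sum.inl i, Sum.inr (Sum.inl _) => -x i
        | Sum.inl _, Sum.inr (Sum.inr _) => 0
        | Sum.inr _, Sum.inl _ => 0
        | Sum.inr (Sum.inl _), Sum.inr (Sum.inl _) => 1
        | Sum.inr (Sum.inl _), Sum.inr (Sum.inr _) => 0
        | Sum.inr (Sum.inr _), Sum.inr (Sum.inl _) => 0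
        | Sum.inr (Sum.inr i), Sum.inr (Sum.inr j) => if i = j then 1 else 0
    · ext p q
      rcases p with (pi | pt) | (pt | pi) <;> rcases q with (qj | qt) | (qt | qj) <;>
        simp [Matrix.mul_apply, Fintype.sum_sum_type, Fin.sum_univ_one, dotProduct, mulVec,
          mul_ite, ite_mul, Finset.sum_ite_eq, Finset.sum_ite_eq', hx', hx'', h11',
          Fin.fin_one_eq_zero] <;>
        simp [hxA, hA21, hx', hx'', mul_comm] <;> ring
    · exact Matrix.of fun p q =>
        match p, q with
        | Sum.inl (Sum.inl i), Sum.inl j => if i = j then (1:ℝ) else 0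
        | Sum.inl (Sum.inl _), Sum.inr _ => 0
        | Sum.inl (Sum.inr _), Sum.inr (Sum.inl _) => 1
        | Sum.inl (Sum.inr _), _ => 0
        | Sum.inr (Sum.inl _), Sum.inr (Sum.inl _) => 1
        | Sum.inr (Sum.inl _), _ => 0
        | Sum.inr (Sum.inr i), Sum.inr (Sum.inr j) => if i = j then 1 else 0
        | Sum.inr (Sum.inr _), _ => 0
    · ext p q
      rcases p with pi | pt | pi <;> rcases q with qj | qt | qj <;>
        simp [Matrix.mul_apply, Fintype.sum_sum_type, Fin.sum_univ_one, dotProduct, mulVec,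
          mul_ite, ite_mul, Finset.sum_ite_eq, Finset.sum_ite_eq', hx', hx'', h11',
          Fin.fin_one_eq_zero] <;>
        simp [hxA, hA21, hx', hx'', mul_comm] <;> ring
  · right
    obtain ⟨v, hv, hvb⟩ := key A₁₁ h11 (fun i => A₁₂ i 0) hx
    set c : ℝ := v ⬝ᵥ (fun i => A₁₂ i 0) with hc
    have hv' : ∀ i, (∑ j, A₁₁ i j * v j) = 0 := fun i => congrFun hv i
    have hv'' : ∀ i, (∑ j, A₁₁ j i * v j) = 0 := by
      intro i; rw [← hv' i]; exact Finset.sum_congr rfl fun j _ => by rw [h11']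
    have hcs : (∑ i, v i * A₁₂ i 0) = c := rfl
    have hcs' : (∑ i, A₁₂ i 0 * v i) = c := by
      rw [← hcs]; exact Finset.sum_congr rfl fun j _ => mul_comm _ _
    have hA21 : ∀ i, A₂₁ 0 i = A₁₂ i 0 := fun i => by rw [h21]; rfl
    have hA32 : ∀ i, A₃₂ i 0 = A₂₃ 0 i := fun i => by rw [h32]; rfl
    have hvA : ∀ i, (∑ j, v j * A₁₁ i j) = 0 := fun i => by
      rw [← hv' i]; exact Finset.sum_congr rfl fun j _ => mul_comm _ _
    have hvA' : ∀ i, (∑ j, v j * A₁₁ j i) = 0 := fun i => by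
      rw [← hv'' i]; exact Finset.sum_congr rfl fun j _ => mul_comm _ _
    have hvA2 : ∀ (a : ℝ) i, (∑ j, a * v j * A₁₁ i j) = 0 := fun a i => by
      simp [mul_assoc, ← Finset.mul_sum, hvA]
    have hvA2' : ∀ (a : ℝ) i, (∑ j, a * v j * A₁₁ j i) = 0 := fun a i => by
      simp [mul_assoc, ← Finset.mul_sum, hvA']
    have hd1 : ∀ (a : ℝ) i, (∑ j, A₁₁ i j * (a * v j)) = 0 := fun a i => by
      have h : ∀ j, A₁₁ i j * (a * v j) = a * (v j * A₁₁ i j) := fun j => by ring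
      simp [h, ← Finset.mul_sum, hvA]
    have hd2 : ∀ i, (∑ j, A₁₁ i j * (v j / c)) = 0 := fun i => by
      have h : ∀ j, A₁₁ i j * (v j / c) = c⁻¹ * (v j * A₁₁ i j) := fun j => by ring
      simp [h, ← Finset.mul_sum, hvA]
    have hd3 : ∀ i, (∑ j, v j / c * A₁₁ i j) = 0 := fun i => by
      have h : ∀ j, v j / c * A₁₁ i j = c⁻¹ * (v j * A₁₁ i j) := fun j => by ring
      simp [h, ← Finset.mul_sum, hvA]
    have hs1 : ∀ (a : ℝ), (∑ x, a * v x * A₁₂ x 0) = a * c := fun a => by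
      have h : ∀ j, a * v j * A₁₂ j 0 = a * (v j * A₁₂ j 0) := fun j => by ring
      simp [h, ← Finset.mul_sum, hcs]
    have hs2 : ∀ (a : ℝ), (∑ x, A₁₂ x 0 * (a * v x)) = a * c := fun a => by
      have h : ∀ j, A₁₂ j 0 * (a * v j) = a * (v j * A₁₂ j 0) := fun j => by ring
      simp [h, ← Finset.mul_sum, hcs]
    have hs3 : (∑ x, A₁₂ x 0 * (v x / c)) = 1 := by
      have h : ∀ j, A₁₂ j 0 * (v j / c) = c⁻¹ * (v j * A₁₂ j 0) := fun j => by ring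
      simp [h, ← Finset.mul_sum, hcs, inv_mul_cancel₀ hvb]
    have hs4 : (∑ x, v x / c * A₁₂ x 0) = 1 := by
      have h : ∀ j, v j / c * A₁₂ j 0 = c⁻¹ * (v j * A₁₂ j 0) := fun j => by ring
      simp [h, ← Finset.mul_sum, hcs, inv_mul_cancel₀ hvb]
    refine ⟨⟨?_, ?_⟩, ⟨?_, ?_⟩⟩
    · exact Matrix.of fun p q =>
        match p, q with
        | Sum.inl i, Sum.inl (Sum.inl j) =>
            (if i = j then (1:ℝ) else 0) - A₁₂ j 0 / c * v i
        | Sum.inl i, Sum.inl (Sum.inr j) => -(A₂₃ 0 j / c) * v i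
        | Sum.inl i, Sum.inr t => if t = 0 then v i / c else -(a₂₂ / (2*c)) * v i
        | Sum.inr (Sum.inl _), Sum.inr t => if t = 0 then 0 else 1
        | Sum.inr (Sum.inl _), Sum.inl _ => 0
        | Sum.inr (Sum.inr i), Sum.inl (Sum.inr j) => if i = j then 1 else 0
        | Sum.inr (Sum.inr _), _ => 0
    · ext p q
      rcases p with (pi | pi) | pt <;> rcases q with (qj | qj) | qt <;>
        [skip; skip; fin_cases qt; skip; skip; fin_cases qt;
         fin_cases pt; fin_cases pt; fin_cases pt <;> fin_cases qt] <;>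
        simp [Matrix.mul_apply, Fintype.sum_sum_type, Fin.sum_univ_one, Fin.sum_univ_two,
          dotProduct, mulVec, mul_ite, ite_mul, Finset.sum_ite_eq, Finset.sum_ite_eq',
          sub_mul, mul_sub, add_mul, mul_add, neg_mul, mul_neg,
          Finset.sum_add_distrib, Finset.sum_sub_distrib,
          hv', hv'', hvA, hvA', hvA2, hvA2', hd1, hd2, hd3, hs1, hs2, hs3, hs4,
          h11', hA21, hA32, Fin.fin_one_eq_zero] <;>
        field_simp <;> ring
    · exact Matrix.of fun p q =>
        match p, q with
        | Sum.inl (Sum.inl i), Sum.inl j => if i = j then (1:ℝ) else 0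
        | Sum.inl (Sum.inl _), Sum.inr _ => 0
        | Sum.inl (Sum.inr i), Sum.inr (Sum.inr j) => if i = j then 1 else 0
        | Sum.inl (Sum.inr _), _ => 0
        | Sum.inr t, Sum.inl j => if t = 0 then A₁₂ j 0 else 0
        | Sum.inr t, Sum.inr (Sum.inl _) => if t = 0 then a₂₂ / 2 else 1
        | Sum.inr t, Sum.inr (Sum.inr j) => if t = 0 then A₂₃ 0 j else 0
    · ext p q
      rcases p with pi | pt | pi <;> rcases q with qj | qt | qj <;>
        simp [Matrix.mul_apply, Fintype.sum_sum_type, Fin.sum_univ_one, Fin.sum_univ_two,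
          dotProduct, mulVec, mul_ite, ite_mul, Finset.sum_ite_eq, Finset.sum_ite_eq',
          hA21, hA32, Fin.fin_one_eq_zero] <;>
        ring
end

section
/- Let (G,Σ) be a signed graph with a 1-separation [(G₁,Σ₁),(G₂,Σ₂)] with cut vertex v. Let C ∈ S(G₁,Σ₁)_E and D ∈ S(G₂,Σ₂)_O with diagonal entries c_{vv} < 0 and d_{vv} > 0 at v. Then there exists a scalar α > 0 such that αC ⊕₁ D ∈ S(G,Σ). -/
open Matrix

structure SignedGraph (V : Type*) where
  odd : V → V → Prop
  even : V → V → Prop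
  odd_symm : ∀ i j, odd i j → odd j i
  even_symm : ∀ i j, even i j → even j i

def SignedGraph.matSet {V : Type*} [Fintype V] (G : SignedGraph V) : Set (Matrix V V ℝ) :=
  {A | Aᵀ = A ∧ ∀ i j, (0 < A i j → G.odd i j) ∧ (A i j < 0 → G.even i j) ∧
    (A i j = 0 → (G.odd i j ∧ G.even i j) ∨ (¬ G.odd i j ∧ ¬ G.even i j))}

/-- Add an even loop at the vertex `v`. -/
def SignedGraph.addEvenLoop {V : Type*} (G : SignedGraph V) (v : V) : SignedGraph V where
  odd := G.odd
  even := fun i j => G.even i j ∨ (i = v ∧ j = v)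
  odd_symm := G.odd_symm
  even_symm := fun i j h => h.elim (fun h' => Or.inl (G.even_symm i j h'))
    (fun h' => Or.inr ⟨h'.2, h'.1⟩)

/-- Add an odd loop at the vertex `v`. -/
def SignedGraph.addOddLoop {V : Type*} (G : SignedGraph V) (v : V) : SignedGraph V where
  odd := fun i j => G.odd i j ∨ (i = v ∧ j = v)
  even := G.even
  odd_symm := fun i j h => h.elim (fun h' => Or.inl (G.odd_symm i j h'))
    (fun h' => Or.inr ⟨h'.2, h'.1⟩)
  even_symm := G.even_symm

def emb₁ {k r : ℕ} : Fin k ⊕ Fin 1 → Fin k ⊕ (Fin 1 ⊕ Fin r) :=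
  Sum.elim Sum.inl (fun i => Sum.inr (Sum.inl i))

def emb₂ {k r : ℕ} : Fin 1 ⊕ Fin r → Fin k ⊕ (Fin 1 ⊕ Fin r) := Sum.inr

def IsOneSeparation {k r : ℕ} (G : SignedGraph (Fin k ⊕ (Fin 1 ⊕ Fin r)))
    (G₁ : SignedGraph (Fin k ⊕ Fin 1)) (G₂ : SignedGraph (Fin 1 ⊕ Fin r)) : Prop :=
  (∀ u w, G.odd u w ↔
      ((∃ a b, emb₁ a = u ∧ emb₁ b = w ∧ G₁.odd a b) ∨
        (∃ a b, emb₂ a = u ∧ emb₂ b = w ∧ G₂.odd a b))) ∧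
  (∀ u w, G.even u w ↔
      ((∃ a b, emb₁ a = u ∧ emb₁ b = w ∧ G₁.even a b) ∨
        (∃ a b, emb₂ a = u ∧ emb₂ b = w ∧ G₂.even a b)))

def oneSubdirectSum {k r : ℕ} (B : Matrix (Fin k ⊕ Fin 1) (Fin k ⊕ Fin 1) ℝ)
    (D : Matrix (Fin 1 ⊕ Fin r) (Fin 1 ⊕ Fin r) ℝ) :
    Matrix (Fin k ⊕ (Fin 1 ⊕ Fin r)) (Fin k ⊕ (Fin 1 ⊕ Fin r)) ℝ :=
  fromBlocks B.toBlocks₁₁ (fromCols B.toBlocks₁₂ 0) (fromRows B.toBlocks₂₁ 0)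
    (fromBlocks (B.toBlocks₂₂ + D.toBlocks₁₁) D.toBlocks₁₂ D.toBlocks₂₁ D.toBlocks₂₂)

/-- With a 1-separation with cut vertex `v`, if `C ∈ S(G₁,Σ₁)_E` and
`D ∈ S(G₂,Σ₂)_O` have `c_vv < 0` and `d_vv > 0`, then `α C ⊕₁ D ∈ S(G,Σ)` for some
`α > 0`. -/
theorem stmt11 {k r : ℕ} (G : SignedGraph (Fin k ⊕ (Fin 1 ⊕ Fin r)))
    (G₁ : SignedGraph (Fin k ⊕ Fin 1)) (G₂ : SignedGraph (Fin 1 ⊕ Fin r))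
    (hsep : IsOneSeparation G G₁ G₂)
    (C : Matrix (Fin k ⊕ Fin 1) (Fin k ⊕ Fin 1) ℝ)
    (D : Matrix (Fin 1 ⊕ Fin r) (Fin 1 ⊕ Fin r) ℝ)
    (hC : C ∈ (G₁.addEvenLoop (Sum.inr 0)).matSet)
    (hD : D ∈ (G₂.addOddLoop (Sum.inl 0)).matSet)
    (hCv : C (Sum.inr 0) (Sum.inr 0) < 0)
    (hDv : 0 < D (Sum.inl 0) (Sum.inl 0)) :
    ∃ α : ℝ, 0 < α ∧ oneSubdirectSum (α • C) D ∈ G.matSet := by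
  classical
  obtain ⟨hCsymm, hCsign⟩ := hC
  obtain ⟨hDsymm, hDsign⟩ := hD
  obtain ⟨hodd, heven⟩ := hsep
  set c := C (Sum.inr 0) (Sum.inr 0) with hcdef
  set d := D (Sum.inl 0) (Sum.inl 0) with hddef
  set v : Fin k ⊕ (Fin 1 ⊕ Fin r) := Sum.inr (Sum.inl 0) with hv
  have hcne : c ≠ 0 := ne_of_lt hCv
  -- a general decomposition lemma for predicates satisfying the separation property
  have gen : ∀ (P : Fin k ⊕ (Fin 1 ⊕ Fin r) → Fin k ⊕ (Fin 1 ⊕ Fin r) → Prop)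
      (P₁ : Fin k ⊕ Fin 1 → Fin k ⊕ Fin 1 → Prop)
      (P₂ : Fin 1 ⊕ Fin r → Fin 1 ⊕ Fin r → Prop),
      (∀ u w, P u w ↔
        ((∃ a b, emb₁ a = u ∧ emb₁ b = w ∧ P₁ a b) ∨
          (∃ a b, emb₂ a = u ∧ emb₂ b = w ∧ P₂ a b))) →
      (P (Sum.inr (Sum.inl 0)) (Sum.inr (Sum.inl 0)) ↔
          (P₁ (Sum.inr 0) (Sum.inr 0) ∨ P₂ (Sum.inl 0) (Sum.inl 0))) ∧
      (∀ i j : Fin k, P (Sum.inl i) (Sum.inl j) ↔ P₁ (Sum.inl i) (Sum.inl j)) ∧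
      (∀ i : Fin k, P (Sum.inl i) (Sum.inr (Sum.inl 0)) ↔ P₁ (Sum.inl i) (Sum.inr 0)) ∧
      (∀ j : Fin k, P (Sum.inr (Sum.inl 0)) (Sum.inl j) ↔ P₁ (Sum.inr 0) (Sum.inl j)) ∧
      (∀ j : Fin r, P (Sum.inr (Sum.inl 0)) (Sum.inr (Sum.inr j)) ↔ P₂ (Sum.inl 0) (Sum.inr j)) ∧
      (∀ i : Fin r, P (Sum.inr (Sum.inr i)) (Sum.inr (Sum.inl 0)) ↔ P₂ (Sum.inr i) (Sum.inl 0)) ∧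
      (∀ i j : Fin r, P (Sum.inr (Sum.inr i)) (Sum.inr (Sum.inr j)) ↔ P₂ (Sum.inr i) (Sum.inr j)) ∧
      (∀ (i : Fin k) (j : Fin r), ¬ P (Sum.inl i) (Sum.inr (Sum.inr j))) ∧
      (∀ (i : Fin r) (j : Fin k), ¬ P (Sum.inr (Sum.inr i)) (Sum.inl j)) := by
    intro P P₁ P₂ hP
    refine ⟨?_, ?_, ?_, ?_, ?_, ?_, ?_, ?_, ?_⟩ <;>
      (try intro i) <;> (try intro j) <;> rw [hP] <;>
      simp [emb₁, emb₂, Sum.exists, Fin.fin_one_eq_zero]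
  obtain ⟨oVV, oLL, oLv, ovL, ovR, oRv, oRR, oLR, oRL⟩ := gen G.odd G₁.odd G₂.odd hodd
  obtain ⟨eVV, eLL, eLv, evL, evR, eRv, eRR, eLR, eRL⟩ := gen G.even G₁.even G₂.even heven
  -- choose α
  have hα : ∃ α : ℝ, 0 < α ∧
      ((0 < α * c + d → G.odd v v) ∧ (α * c + d < 0 → G.even v v) ∧
        (α * c + d = 0 → (G.odd v v ∧ G.even v v) ∨ (¬ G.odd v v ∧ ¬ G.even v v))) := by
    have hne : (-c) ≠ 0 := neg_ne_zero.mpr hcne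
    have hne2 : (-(2 * c)) ≠ 0 := by simp [hcne]
    by_cases ho : G.odd v v
    · refine ⟨d / (-(2 * c)), div_pos hDv (by linarith), ?_⟩
      have h1 : d / (-(2 * c)) * c + d = d / 2 := by
        have h2 : d / (-(2 * c)) * (-(2 * c)) = d := div_mul_cancel₀ d hne2
        nlinarith [h2]
      rw [h1]
      exact ⟨fun _ => ho, fun h => absurd hDv (by linarith), fun h => absurd hDv (by linarith)⟩
    · by_cases he : G.even v v
      · refine ⟨2 * d / (-c), div_pos (by linarith) (by linarith), ?_⟩
        have h1 : 2 * d / (-c) * c + d = -d := by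
          have h2 : 2 * d / (-c) * (-c) = 2 * d := div_mul_cancel₀ _ hne
          nlinarith [h2]
        rw [h1]
        exact ⟨fun h => absurd hDv (by linarith), fun _ => he,
          fun h => absurd hDv (by linarith)⟩
      · refine ⟨d / (-c), div_pos hDv (by linarith), ?_⟩
        have h1 : d / (-c) * c + d = 0 := by
          have h2 : d / (-c) * (-c) = d := div_mul_cancel₀ _ hne
          nlinarith [h2]
        rw [h1]
        exact ⟨fun h => absurd h (by norm_num), fun h => absurd h (by norm_num),
          fun _ => Or.inr ⟨ho, he⟩⟩
  obtain ⟨α, hαpos, hαo, hαe, hαz⟩ := hα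
  have hmulpos : ∀ x : ℝ, (0 < α * x ↔ 0 < x) := by
    intro x; constructor <;> intro h <;> nlinarith
  have hmulneg : ∀ x : ℝ, (α * x < 0 ↔ x < 0) := by
    intro x; constructor <;> intro h <;> nlinarith
  have hmulzero : ∀ x : ℝ, (α * x = 0 ↔ x = 0) := by
    intro x; simp [mul_eq_zero, ne_of_gt hαpos]
  have hCs : ∀ i j, C j i = C i j := fun i j => congrFun (congrFun hCsymm i) j
  have hDs : ∀ i j, D j i = D i j := fun i j => congrFun (congrFun hDsymm i) j
  refine ⟨α, hαpos, ?_, ?_⟩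
  · -- symmetry
    ext u w
    rcases u with i | i | i <;> rcases w with j | j | j <;>
      simp only [Matrix.transpose_apply, oneSubdirectSum, Matrix.fromBlocks_apply₁₁,
        Matrix.fromBlocks_apply₁₂, Matrix.fromBlocks_apply₂₁, Matrix.fromBlocks_apply₂₂,
        Matrix.fromCols_apply_inl, Matrix.fromCols_apply_inr,
        Matrix.fromRows_apply_inl, Matrix.fromRows_apply_inr, Matrix.toBlocks₁₁,
        Matrix.toBlocks₁₂, Matrix.toBlocks₂₁, Matrix.toBlocks₂₂, Matrix.of_apply,
        Matrix.smul_apply, Matrix.add_apply, Matrix.zero_apply, smul_eq_mul] <;>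
      (try rw [hCs]) <;> (try rw [hDs])
  · intro u w
    rcases u with i | i | i <;> rcases w with j | j | j <;>
      simp only [oneSubdirectSum, Matrix.fromBlocks_apply₁₁,
        Matrix.fromBlocks_apply₁₂, Matrix.fromBlocks_apply₂₁, Matrix.fromBlocks_apply₂₂,
        Matrix.fromCols_apply_inl, Matrix.fromCols_apply_inr,
        Matrix.fromRows_apply_inl, Matrix.fromRows_apply_inr, Matrix.toBlocks₁₁,
        Matrix.toBlocks₁₂, Matrix.toBlocks₂₁, Matrix.toBlocks₂₂, Matrix.of_apply,
        Matrix.smul_apply, Matrix.add_apply, Matrix.zero_apply, smul_eq_mul]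
    · -- (inl i, inl j)
      obtain ⟨h1, h2, h3⟩ := hCsign (Sum.inl i) (Sum.inl j)
      simp only [SignedGraph.addEvenLoop, reduceCtorEq, false_and, or_false] at h1 h2 h3
      rw [oLL, eLL, hmulpos, hmulneg, hmulzero]
      exact ⟨h1, h2, h3⟩
    · -- (inl i, inr (inl j))
      rw [Fin.fin_one_eq_zero j]
      obtain ⟨h1, h2, h3⟩ := hCsign (Sum.inl i) (Sum.inr 0)
      simp only [SignedGraph.addEvenLoop, reduceCtorEq, false_and, or_false] at h1 h2 h3
      rw [oLv, eLv, hmulpos, hmulneg, hmulzero]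
      exact ⟨h1, h2, h3⟩
    · -- (inl i, inr (inr j)) : zero entry
      exact ⟨fun h => absurd h (by norm_num), fun h => absurd h (by norm_num),
        fun _ => Or.inr ⟨oLR i j, eLR i j⟩⟩
    · -- (inr (inl i), inl j)
      rw [Fin.fin_one_eq_zero i]
      obtain ⟨h1, h2, h3⟩ := hCsign (Sum.inr 0) (Sum.inl j)
      simp only [SignedGraph.addEvenLoop, reduceCtorEq, and_false, or_false] at h1 h2 h3
      rw [ovL, evL, hmulpos, hmulneg, hmulzero]
      exact ⟨h1, h2, h3⟩
    · -- (inr (inl i), inr (inl j)) : cut vertex diagonal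
      rw [Fin.fin_one_eq_zero i, Fin.fin_one_eq_zero j]
      exact ⟨hαo, hαe, hαz⟩
    · -- (inr (inl i), inr (inr j))
      rw [Fin.fin_one_eq_zero i]
      obtain ⟨h1, h2, h3⟩ := hDsign (Sum.inl 0) (Sum.inr j)
      simp only [SignedGraph.addOddLoop, reduceCtorEq, and_false, or_false] at h1 h2 h3
      rw [ovR, evR]
      exact ⟨h1, h2, h3⟩
    · -- (inr (inr i), inl j) : zero entry
      exact ⟨fun h => absurd h (by norm_num), fun h => absurd h (by norm_num),
        fun _ => Or.inr ⟨oRL i j, eRL i j⟩⟩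
    · -- (inr (inr i), inr (inl j))
      rw [Fin.fin_one_eq_zero j]
      obtain ⟨h1, h2, h3⟩ := hDsign (Sum.inr i) (Sum.inl 0)
      simp only [SignedGraph.addOddLoop, reduceCtorEq, false_and, or_false] at h1 h2 h3
      rw [oRv, eRv]
      exact ⟨h1, h2, h3⟩
    · -- (inr (inr i), inr (inr j))
      obtain ⟨h1, h2, h3⟩ := hDsign (Sum.inr i) (Sum.inr j)
      simp only [SignedGraph.addOddLoop, reduceCtorEq, false_and, or_false] at h1 h2 h3
      rw [oRR, eRR]
      exact ⟨h1, h2, h3⟩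
end

section
/- Let (G,Σ) be a signed graph with a 1-separation [(G₁,Σ₁),(G₂,Σ₂)] with cut vertex v, and let n = |V(G)|. Then S(G₁,Σ₁) ⊕ S(G₂,Σ₂) → S(G,Σ): for every A₁ ∈ S(G₁,Σ₁) and A₂ ∈ S(G₂,Σ₂), there exist a matrix M ∈ S(G,Σ) and a real matrix P such that Pᵀ diag(A₁,A₂) P = M. -/
open Matrix

def Pmat {k r : ℕ} : Matrix ((Fin k ⊕ Fin 1) ⊕ (Fin 1 ⊕ Fin r)) (Fin k ⊕ (Fin 1 ⊕ Fin r)) ℝ :=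
  Matrix.of fun x y => if Sum.elim emb₁ emb₂ x = y then 1 else 0

def Mmat {k r : ℕ} (A₁ : Matrix (Fin k ⊕ Fin 1) (Fin k ⊕ Fin 1) ℝ)
    (A₂ : Matrix (Fin 1 ⊕ Fin r) (Fin 1 ⊕ Fin r) ℝ) :
    Matrix (Fin k ⊕ (Fin 1 ⊕ Fin r)) (Fin k ⊕ (Fin 1 ⊕ Fin r)) ℝ
  | Sum.inl a, Sum.inl b => A₁ (Sum.inl a) (Sum.inl b)
  | Sum.inl a, Sum.inr (Sum.inl v) => A₁ (Sum.inl a) (Sum.inr v)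
  | Sum.inl _, Sum.inr (Sum.inr _) => 0
  | Sum.inr (Sum.inl v), Sum.inl b => A₁ (Sum.inr v) (Sum.inl b)
  | Sum.inr (Sum.inl v), Sum.inr (Sum.inl w) =>
      A₁ (Sum.inr v) (Sum.inr w) + A₂ (Sum.inl v) (Sum.inl w)
  | Sum.inr (Sum.inl v), Sum.inr (Sum.inr b) => A₂ (Sum.inl v) (Sum.inr b)
  | Sum.inr (Sum.inr _), Sum.inl _ => 0
  | Sum.inr (Sum.inr a), Sum.inr (Sum.inl w) => A₂ (Sum.inr a) (Sum.inl w)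
  | Sum.inr (Sum.inr a), Sum.inr (Sum.inr b) => A₂ (Sum.inr a) (Sum.inr b)

lemma prod_eq_Mmat {k r : ℕ} (A₁ : Matrix (Fin k ⊕ Fin 1) (Fin k ⊕ Fin 1) ℝ)
    (A₂ : Matrix (Fin 1 ⊕ Fin r) (Fin 1 ⊕ Fin r) ℝ) :
    Matrix.transpose (Pmat (k := k) (r := r)) * fromBlocks A₁ 0 0 A₂ * Pmat (k := k) (r := r) = Mmat A₁ A₂ := by
  ext u w
  rcases u with a | (v | a) <;> rcases w with b | (w | b) <;>
    simp [Pmat, Mmat, Matrix.mul_apply, Fintype.sum_sum_type, emb₁, emb₂,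
      Fin.sum_univ_one, fromBlocks, ite_mul, mul_ite, Finset.sum_ite_eq,
      Finset.sum_ite_eq', Sum.forall, Fin.eq_zero]

def combRel {k r : ℕ} (R₁ : (Fin k ⊕ Fin 1) → (Fin k ⊕ Fin 1) → Prop)
    (R₂ : (Fin 1 ⊕ Fin r) → (Fin 1 ⊕ Fin r) → Prop) :
    Fin k ⊕ (Fin 1 ⊕ Fin r) → Fin k ⊕ (Fin 1 ⊕ Fin r) → Prop
  | Sum.inl a, Sum.inl b => R₁ (Sum.inl a) (Sum.inl b)
  | Sum.inl a, Sum.inr (Sum.inl v) => R₁ (Sum.inl a) (Sum.inr v)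
  | Sum.inl _, Sum.inr (Sum.inr _) => False
  | Sum.inr (Sum.inl v), Sum.inl b => R₁ (Sum.inr v) (Sum.inl b)
  | Sum.inr (Sum.inl v), Sum.inr (Sum.inl w) =>
      R₁ (Sum.inr v) (Sum.inr w) ∨ R₂ (Sum.inl v) (Sum.inl w)
  | Sum.inr (Sum.inl v), Sum.inr (Sum.inr b) => R₂ (Sum.inl v) (Sum.inr b)
  | Sum.inr (Sum.inr _), Sum.inl _ => False
  | Sum.inr (Sum.inr a), Sum.inr (Sum.inl w) => R₂ (Sum.inr a) (Sum.inl w)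
  | Sum.inr (Sum.inr a), Sum.inr (Sum.inr b) => R₂ (Sum.inr a) (Sum.inr b)

lemma combRel_iff {k r : ℕ} (R : (Fin k ⊕ (Fin 1 ⊕ Fin r)) → (Fin k ⊕ (Fin 1 ⊕ Fin r)) → Prop)
    (R₁ : (Fin k ⊕ Fin 1) → (Fin k ⊕ Fin 1) → Prop)
    (R₂ : (Fin 1 ⊕ Fin r) → (Fin 1 ⊕ Fin r) → Prop)
    (h : ∀ u w, R u w ↔
      ((∃ a b, emb₁ a = u ∧ emb₁ b = w ∧ R₁ a b) ∨
        (∃ a b, emb₂ a = u ∧ emb₂ b = w ∧ R₂ a b)))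
    (u w : Fin k ⊕ (Fin 1 ⊕ Fin r)) : R u w ↔ combRel R₁ R₂ u w := by
  rw [h]
  rcases u with a | (v | a) <;> rcases w with b | (w | b) <;>
    simp [combRel, emb₁, emb₂, Sum.exists, Fin.eq_zero, eq_comm]

/-- `S(G₁,Σ₁) ⊕ S(G₂,Σ₂) → S(G,Σ)` for a 1-separation: for all
`A₁ ∈ S(G₁,Σ₁)`, `A₂ ∈ S(G₂,Σ₂)` there are `M ∈ S(G,Σ)` and a real matrix `P` with
`Pᵀ diag(A₁, A₂) P = M`. -/
theorem stmt12 {k r : ℕ} (G : SignedGraph (Fin k ⊕ (Fin 1 ⊕ Fin r)))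
    (G₁ : SignedGraph (Fin k ⊕ Fin 1)) (G₂ : SignedGraph (Fin 1 ⊕ Fin r))
    (hsep : IsOneSeparation G G₁ G₂)
    (A₁ : Matrix (Fin k ⊕ Fin 1) (Fin k ⊕ Fin 1) ℝ) (hA₁ : A₁ ∈ G₁.matSet)
    (A₂ : Matrix (Fin 1 ⊕ Fin r) (Fin 1 ⊕ Fin r) ℝ) (hA₂ : A₂ ∈ G₂.matSet) :
    ∃ M ∈ G.matSet,
      ∃ P : Matrix ((Fin k ⊕ Fin 1) ⊕ (Fin 1 ⊕ Fin r)) (Fin k ⊕ (Fin 1 ⊕ Fin r)) ℝ,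
        Pᵀ * fromBlocks A₁ 0 0 A₂ * P = M := by
  obtain ⟨h1s, h1⟩ := hA₁
  obtain ⟨h2s, h2⟩ := hA₂
  have hodd := combRel_iff G.odd G₁.odd G₂.odd hsep.1
  have heven := combRel_iff G.even G₁.even G₂.even hsep.2
  have e1 : ∀ i j, A₁ i j = A₁ j i := fun i j => congrFun (congrFun h1s j) i
  have e2 : ∀ i j, A₂ i j = A₂ j i := fun i j => congrFun (congrFun h2s j) i
  refine ⟨Mmat A₁ A₂, ⟨?_, ?_⟩, Pmat, prod_eq_Mmat A₁ A₂⟩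
  · ext u w
    rcases u with a | (v | a) <;> rcases w with b | (w | b) <;>
      simp only [Matrix.transpose_apply, Mmat] <;>
      first
        | rfl
        | exact e1 _ _
        | exact e2 _ _
        | rw [e1, e2]
  · intro i j
    simp only [hodd, heven]
    rcases i with a | (v | a) <;> rcases j with b | (w | b) <;>
      simp only [Mmat, combRel]
    · exact h1 _ _
    · exact h1 _ _
    · simp
    · exact h1 _ _
    · obtain ⟨p1, q1, z1⟩ := h1 (Sum.inr v) (Sum.inr w)
      obtain ⟨p2, q2, z2⟩ := h2 (Sum.inl v) (Sum.inl w)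
      refine ⟨?_, ?_, ?_⟩
      · intro h
        rcases lt_or_ge 0 (A₁ (Sum.inr v) (Sum.inr w)) with hx | hx
        · exact Or.inl (p1 hx)
        · exact Or.inr (p2 (by linarith))
      · intro h
        rcases lt_or_ge (A₁ (Sum.inr v) (Sum.inr w)) 0 with hx | hx
        · exact Or.inl (q1 hx)
        · exact Or.inr (q2 (by linarith))
      · intro h
        rcases lt_trichotomy (A₁ (Sum.inr v) (Sum.inr w)) 0 with hx | hx | hx
        · exact Or.inl ⟨Or.inr (p2 (by linarith)), Or.inl (q1 hx)⟩
        · have hy : A₂ (Sum.inl v) (Sum.inl w) = 0 := by linarith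
          rcases z1 hx with ⟨o1, f1⟩ | ⟨no1, nf1⟩ <;> rcases z2 hy with ⟨o2, f2⟩ | ⟨no2, nf2⟩
          · exact Or.inl ⟨Or.inl o1, Or.inl f1⟩
          · exact Or.inl ⟨Or.inl o1, Or.inl f1⟩
          · exact Or.inl ⟨Or.inr o2, Or.inr f2⟩
          · exact Or.inr ⟨by tauto, by tauto⟩
        · exact Or.inl ⟨Or.inl (p1 hx), Or.inr (q2 (by linarith))⟩
    · exact h2 _ _
    · simp
    · exact h2 _ _
    · exact h2 _ _
end

section
/- Let (G,Σ) be the signed graph on 3 vertices forming a path with both edges odd and with an odd loop at every vertex. Then (2,0) ∈ ℐ(G,Σ), and (0,0), (1,0) ∉ ℐ(G,Σ). That is, there exists a positive semidefinite matrix of rank 2 in S(G,Σ), and every matrix in S(G,Σ) has at least two positive eigenvalues or a negative eigenvalue, and no matrix has fewer than 2 nonzero eigenvalues with all of them positive except rank ≥ 2. -/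
open Matrix

open Classical in
noncomputable def pin {n : Type*} [Fintype n] [DecidableEq n] (A : Matrix n n ℝ) : ℕ × ℕ :=
  if h : A.IsHermitian then
    (Fintype.card {i // 0 < h.eigenvalues i}, Fintype.card {i // h.eigenvalues i < 0})
  else (0, 0)

/-- Membership in `S(G,Σ)` for the signed graph on 3 vertices forming a path with both
edges odd and an odd loop at every vertex: symmetric, nonnegative diagonal (odd loops, no
even loops), zero `(0,2)` entry (no edge), positive `(0,1)`, `(1,2)` entries (odd edges). -/
def OddPathOddLoops (A : Matrix (Fin 3) (Fin 3) ℝ) : Prop :=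
  Aᵀ = A ∧ 0 ≤ A 0 0 ∧ 0 ≤ A 1 1 ∧ 0 ≤ A 2 2 ∧ A 0 2 = 0 ∧ 0 < A 0 1 ∧ 0 < A 1 2

lemma herm_of_symm {A : Matrix (Fin 3) (Fin 3) ℝ} (h : Aᵀ = A) : A.IsHermitian := by
  rw [Matrix.IsHermitian]
  ext i j
  simp [Matrix.conjTranspose_apply]
  exact congrFun (congrFun h i) j

/-- quadratic helper -/
lemma quad_pos {a b c : ℝ} (h : ∀ t : ℝ, 0 ≤ a * t ^ 2 + 2 * b * t + c)
    (hb : 0 < b) (ha : 0 ≤ a) : 0 < a := by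
  rcases ha.lt_or_eq with h' | h'
  · exact h'
  · exfalso
    have ht := h (-(c + 1) / (2 * b))
    rw [← h'] at ht
    have hb' : (2 : ℝ) * b ≠ 0 := by positivity
    field_simp at ht
    nlinarith

/-- If `A ∈ S(G,Σ)` is positive semidefinite then the corner diagonal entries are positive. -/
lemma corner_pos {A : Matrix (Fin 3) (Fin 3) ℝ} (hA : OddPathOddLoops A)
    (hpsd : A.PosSemidef) : 0 < A 0 0 ∧ 0 < A 2 2 := by
  obtain ⟨hsym, h00, h11, h22, h02, h01, h12⟩ := hA
  have h10 : A 1 0 = A 0 1 := congrFun (congrFun hsym.symm 1) 0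
  have h21 : A 2 1 = A 1 2 := congrFun (congrFun hsym.symm 2) 1
  constructor
  · refine quad_pos (a := A 0 0) (b := A 0 1) (c := A 1 1) (fun t => ?_) h01 h00
    have := hpsd.dotProduct_mulVec_nonneg ![t, 1, 0]
    simp only [dotProduct, Matrix.mulVec, Fin.sum_univ_three, star_trivial,
      Pi.star_apply, Matrix.cons_val_zero, Matrix.cons_val_one, Matrix.head_cons,
      Matrix.cons_val_two, Matrix.tail_cons] at this
    rw [h10] at this
    nlinarith [this]
  · refine quad_pos (a := A 2 2) (b := A 1 2) (c := A 1 1) (fun t => ?_) h12 h22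
    have := hpsd.dotProduct_mulVec_nonneg ![0, 1, t]
    simp only [dotProduct, Matrix.mulVec, Fin.sum_univ_three, star_trivial,
      Pi.star_apply, Matrix.cons_val_zero, Matrix.cons_val_one, Matrix.head_cons,
      Matrix.cons_val_two, Matrix.tail_cons] at this
    rw [h21] at this
    nlinarith [this]

/-- If the corner entries are nonzero and the `(0,2)` entries vanish, the rank is ≥ 2. -/
lemma rank_ge_two {A : Matrix (Fin 3) (Fin 3) ℝ} (h02 : A 0 2 = 0) (h20 : A 2 0 = 0)
    (h00 : A 0 0 ≠ 0) (h22 : A 2 2 ≠ 0) : 2 ≤ A.rank := by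
  set v : Fin 3 → ℝ := A.mulVec (Pi.single 0 1) with hv
  set w : Fin 3 → ℝ := A.mulVec (Pi.single 2 1) with hw
  have hv0 : v 0 = A 0 0 := by simp [hv, Matrix.mulVec_single]
  have hv2 : v 2 = A 2 0 := by simp [hv, Matrix.mulVec_single]
  have hw0 : w 0 = A 0 2 := by simp [hw, Matrix.mulVec_single]
  have hw2 : w 2 = A 2 2 := by simp [hw, Matrix.mulVec_single]
  have hli : LinearIndependent ℝ ![v, w] := by
    rw [LinearIndependent.pair_iff]
    intro s t hst
    have e0 := congrFun hst 0
    have e2 := congrFun hst 2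
    simp only [Pi.add_apply, Pi.smul_apply, smul_eq_mul, Pi.zero_apply, hv0, hv2, hw0, hw2,
      h02, h20, mul_zero, add_zero, zero_add] at e0 e2
    constructor
    · exact (mul_eq_zero.mp e0).resolve_right h00
    · exact (mul_eq_zero.mp e2).resolve_right h22
  have hspan : Submodule.span ℝ (Set.range ![v, w]) ≤ LinearMap.range A.mulVecLin := by
    rw [Submodule.span_le]
    rintro x ⟨i, rfl⟩
    fin_cases i
    · exact ⟨Pi.single 0 1, rfl⟩
    · exact ⟨Pi.single 2 1, rfl⟩
  have hfr : Module.finrank ℝ (Submodule.span ℝ (Set.range ![v, w])) = 2 := by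
    rw [finrank_span_eq_card hli]
    simp
  calc (2 : ℕ) = Module.finrank ℝ (Submodule.span ℝ (Set.range ![v, w])) := hfr.symm
    _ ≤ Module.finrank ℝ (LinearMap.range A.mulVecLin) := Submodule.finrank_mono hspan
    _ = A.rank := rfl

lemma card_pos_eq_rank {A : Matrix (Fin 3) (Fin 3) ℝ} (h : A.IsHermitian)
    (hnn : ∀ i, 0 ≤ h.eigenvalues i) :
    Fintype.card {i // 0 < h.eigenvalues i} = A.rank := by
  rw [h.rank_eq_card_non_zero_eigs]
  exact Fintype.card_congr (Equiv.subtypeEquivRight fun i =>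
    ⟨fun hi => hi.ne', fun hi => (hnn i).lt_of_ne (Ne.symm hi)⟩)

/-- For the odd 2-path with odd loops at all vertices,
`(2,0) ∈ ℐ(G,Σ)` while `(0,0), (1,0) ∉ ℐ(G,Σ)`. -/
theorem stmt15 :
    (∃ A : Matrix (Fin 3) (Fin 3) ℝ, OddPathOddLoops A ∧ pin A = (2, 0)) ∧
    (∀ A : Matrix (Fin 3) (Fin 3) ℝ, OddPathOddLoops A →
      pin A ≠ (0, 0) ∧ pin A ≠ (1, 0)) := by
  constructor
  · -- the PSD rank-2 witness
    refine ⟨![![1, 1, 0], ![1, 2, 1], ![0, 1, 1]], ?_, ?_⟩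
    · refine ⟨?_, ?_, ?_, ?_, ?_, ?_, ?_⟩
      · ext i j
        fin_cases i <;> fin_cases j <;> rfl
      all_goals simp [Matrix.vecHead, Matrix.vecTail]
    · set A : Matrix (Fin 3) (Fin 3) ℝ := ![![1, 1, 0], ![1, 2, 1], ![0, 1, 1]] with hAdef
      set B : Matrix (Fin 2) (Fin 3) ℝ := ![![1, 1, 0], ![0, 1, 1]] with hBdef
      have hBA : Bᴴ * B = A := by
        ext i j
        change ∑ k, star (B k i) * B k j = A i j
        fin_cases i <;> fin_cases j <;>
          simp [Fin.sum_univ_two, hAdef, hBdef, one_add_one_eq_two]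
      have hpsd : A.PosSemidef := hBA ▸ Matrix.posSemidef_conjTranspose_mul_self _
      have herm : A.IsHermitian := hpsd.1
      have hnn : ∀ i, 0 ≤ herm.eigenvalues i := fun i => hpsd.eigenvalues_nonneg i
      have hrk2 : A.rank = 2 := by
        have hge : 2 ≤ A.rank := by
          refine rank_ge_two ?_ ?_ ?_ ?_ <;>
            simp [hAdef, Matrix.vecHead, Matrix.vecTail]
        have hle : A.rank ≤ 2 := by
          rw [herm.rank_eq_card_non_zero_eigs]
          have hdet : A.det = 0 := by
            rw [Matrix.det_fin_three]
            simp [hAdef, Matrix.vecHead, Matrix.vecTail]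
            norm_num
          have hprod : ∏ i, herm.eigenvalues i = 0 := by
            have := herm.det_eq_prod_eigenvalues
            rw [hdet] at this
            exact_mod_cast this.symm
          obtain ⟨i, _, hi⟩ := Finset.prod_eq_zero_iff.mp hprod
          have h3 : Fintype.card {j // herm.eigenvalues j ≠ 0} < 3 := by
            simpa using Fintype.card_subtype_lt (p := fun j => herm.eigenvalues j ≠ 0)
              (x := i) (not_not.mpr hi)
          omega
        omega
      have hq : Fintype.card {i // herm.eigenvalues i < 0} = 0 := by
        rw [Fintype.card_eq_zero_iff]
        exact ⟨fun ⟨i, hi⟩ => absurd (hnn i) (not_le.mpr hi)⟩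
      have hp : Fintype.card {i // 0 < herm.eigenvalues i} = 2 := by
        rw [card_pos_eq_rank herm hnn, hrk2]
      rw [pin, dif_pos herm]
      simp [hp, hq]
  · -- no (0,0) or (1,0)
    intro A hA
    have herm : A.IsHermitian := herm_of_symm hA.1
    have key : ∀ p : ℕ, p ≤ 1 → pin A ≠ (p, 0) := by
      intro p hp hpin
      rw [pin, dif_pos herm, Prod.mk.injEq] at hpin
      obtain ⟨hpc, hqc⟩ := hpin
      have hnn : ∀ i, 0 ≤ herm.eigenvalues i := by
        intro i
        by_contra hneg
        rw [Fintype.card_eq_zero_iff] at hqc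
        exact hqc.false ⟨i, not_le.mp hneg⟩
      have hpsd : A.PosSemidef := herm.posSemidef_iff_eigenvalues_nonneg.mpr hnn
      obtain ⟨h00, h22⟩ := corner_pos hA hpsd
      have h20 : A 2 0 = 0 := by
        have ht := congrFun (congrFun hA.1 2) 0
        rw [Matrix.transpose_apply] at ht
        rw [← ht]
        exact hA.2.2.2.2.1
      have hge : 2 ≤ A.rank := rank_ge_two hA.2.2.2.2.1 h20 h00.ne' h22.ne'
      rw [← card_pos_eq_rank herm hnn, hpc] at hge
      omega
    exact ⟨key 0 (by norm_num), key 1 le_rfl⟩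
end

section
/- Let A₁₁ be a symmetric k×k real matrix, A₃₃ a symmetric (n−k−1)×(n−k−1) real matrix, and A₂₁ ∈ ℝ^{1×k}, A₂₃ ∈ ℝ^{1×(n−k−1)} row vectors, a₂₂ ∈ ℝ. Suppose there exists u ∈ ker(diag(A₁₁, A₃₃)) with [A₂₁, A₂₃]u = z ≠ 0 (z a scalar). Then the symmetric n×n matrix A = [[A₁₁, A₂₁ᵀ, 0],[A₂₁, a₂₂, A₂₃],[0, A₂₃ᵀ, A₃₃]] has the same numbers of positive and negative eigenvalues as H ⊕ A₁₁ ⊕ A₃₃, where H = [[0,1],[1,0]]. In particular pin(A) = pin(A₁₁) + pin(A₃₃) + (1,1). -/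
open Matrix

open Matrix BigOperators Function

open Classical

set_option linter.unusedSectionVars false

namespace PinDev

variable {n m : Type*} [Fintype n] [DecidableEq n] [Fintype m] [DecidableEq m]

lemma dotProduct_sum' {ι : Type*} (s : Finset ι) (v : n → ℝ) (f : ι → n → ℝ) :
    v ⬝ᵥ (∑ i ∈ s, f i) = ∑ i ∈ s, v ⬝ᵥ f i := by
  simp only [dotProduct, Finset.sum_apply, Finset.mul_sum]
  exact Finset.sum_comm

lemma sum_dotProduct' {ι : Type*} (s : Finset ι) (v : n → ℝ) (f : ι → n → ℝ) :
    (∑ i ∈ s, f i) ⬝ᵥ v = ∑ i ∈ s, f i ⬝ᵥ v := by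
  simp only [dotProduct, Finset.sum_apply, Finset.sum_mul]
  exact Finset.sum_comm

/-- orthogonal eigenfamily -/
structure OrthoEigen (M : Matrix n n ℝ) (v : n → n → ℝ) (μ : n → ℝ) : Prop where
  orth : ∀ i j, i ≠ j → v i ⬝ᵥ v j = 0
  norm_pos : ∀ i, 0 < v i ⬝ᵥ v i
  eig : ∀ i, M *ᵥ v i = μ i • v i

variable {M : Matrix n n ℝ} {v : n → n → ℝ} {μ : n → ℝ}

lemma OrthoEigen.neg (h : OrthoEigen M v μ) : OrthoEigen (-M) v (-μ) := by
  refine ⟨h.orth, h.norm_pos, fun i => ?_⟩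
  rw [neg_mulVec, h.eig i, Pi.neg_apply, neg_smul]

lemma mulVec_sum' (c : n → ℝ) : M *ᵥ (∑ i, c i • v i) = ∑ i, c i • (M *ᵥ v i) := by
  ext j
  simp only [mulVec, dotProduct, Finset.sum_apply, Pi.smul_apply, smul_eq_mul, Finset.mul_sum]
  rw [Finset.sum_comm]
  exact Finset.sum_congr rfl fun i _ => Finset.sum_congr rfl fun k _ => by ring

lemma OrthoEigen.dot_sum (h : OrthoEigen M v μ) (c : n → ℝ) (j : n) :
    v j ⬝ᵥ (∑ i, c i • v i) = c j * (v j ⬝ᵥ v j) := by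
  rw [dotProduct_sum']
  rw [Finset.sum_eq_single j]
  · rw [dotProduct_smul, smul_eq_mul]
  · intro i _ hij
    rw [dotProduct_smul, h.orth j i (Ne.symm hij), smul_zero]
  · simp

lemma OrthoEigen.mq_sum (h : OrthoEigen M v μ) (c : n → ℝ) :
    (∑ i, c i • v i) ⬝ᵥ M *ᵥ (∑ i, c i • v i)
      = ∑ i, μ i * (c i ^ 2 * (v i ⬝ᵥ v i)) := by
  rw [mulVec_sum', sum_dotProduct']
  refine Finset.sum_congr rfl fun i _ => ?_
  rw [smul_dotProduct, dotProduct_sum']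
  rw [Finset.sum_eq_single i]
  · simp only [h.eig i, dotProduct_smul, smul_eq_mul]; ring
  · intro j _ hij
    simp only [h.eig j, dotProduct_smul, smul_eq_mul, h.orth i j (Ne.symm hij)]; ring
  · simp

lemma OrthoEigen.linIndep (h : OrthoEigen M v μ) : LinearIndependent ℝ v := by
  rw [Fintype.linearIndependent_iff]
  intro c hc j
  have hd := h.dot_sum c j
  rw [hc, dotProduct_zero] at hd
  have hn := h.norm_pos j
  nlinarith [hd.symm]

/-- span of the eigenvectors satisfying P -/
noncomputable def espan (v : n → n → ℝ) (P : n → Prop) : Submodule ℝ (n → ℝ) :=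
  Submodule.span ℝ (Set.range fun i : {i // P i} => v i)

lemma finrank_espan (h : OrthoEigen M v μ) (P : n → Prop) :
    Module.finrank ℝ (espan v P) = Fintype.card {i // P i} := by
  rw [espan]
  exact finrank_span_eq_card (h.linIndep.comp Subtype.val Subtype.val_injective)

lemma mem_espan_repr (h : OrthoEigen M v μ) (P : n → Prop) {x : n → ℝ}
    (hx : x ∈ espan v P) :
    ∃ c : n → ℝ, (∀ i, ¬ P i → c i = 0) ∧ x = ∑ i, c i • v i := by
  rw [espan, Submodule.mem_span_range_iff_exists_fun] at hx
  obtain ⟨c, hc⟩ := hx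
  refine ⟨fun i => if hP : P i then c ⟨i, hP⟩ else 0, fun i hi => by simp [hi], ?_⟩
  rw [← hc]
  rw [← Finset.sum_filter_add_sum_filter_not Finset.univ P]
  have h2 : ∑ i ∈ Finset.univ.filter (fun i => ¬ P i),
      (if hP : P i then c ⟨i, hP⟩ else 0) • v i = 0 := by
    refine Finset.sum_eq_zero fun i hi => ?_
    rw [Finset.mem_filter] at hi
    simp [hi.2]
  rw [h2, add_zero]
  rw [Finset.sum_subtype (p := P) (Finset.univ.filter P) (fun i => by simp)
    (fun i => (if hP : P i then c ⟨i, hP⟩ else 0) • v i)]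
  exact (Finset.sum_congr rfl fun i _ => by simp [i.2]).symm

lemma espan_mq_pos (h : OrthoEigen M v μ) {x : n → ℝ}
    (hx : x ∈ espan v (fun i => 0 < μ i)) (hx0 : x ≠ 0) :
    0 < x ⬝ᵥ M *ᵥ x := by
  obtain ⟨c, hc0, rfl⟩ := mem_espan_repr h _ hx
  rw [h.mq_sum]
  have hex : ∃ j, c j ≠ 0 := by
    by_contra hall
    push_neg at hall
    exact hx0 (by simp [hall])
  obtain ⟨j, hj⟩ := hex
  have hPj : 0 < μ j := by
    by_contra hP; exact hj (hc0 j hP)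
  refine Finset.sum_pos' (fun i _ => ?_) ⟨j, Finset.mem_univ j, ?_⟩
  · by_cases hP : 0 < μ i
    · exact mul_nonneg hP.le (mul_nonneg (sq_nonneg _) (h.norm_pos i).le)
    · simp [hc0 i hP]
  · have hsq : 0 < c j ^ 2 := (sq_nonneg (c j)).lt_of_ne (Ne.symm (pow_ne_zero 2 hj))
    exact mul_pos hPj (mul_pos hsq (h.norm_pos j))

lemma espan_mq_nonpos (h : OrthoEigen M v μ) {x : n → ℝ}
    (hx : x ∈ espan v (fun i => ¬ 0 < μ i)) :
    x ⬝ᵥ M *ᵥ x ≤ 0 := by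
  obtain ⟨c, hc0, rfl⟩ := mem_espan_repr h _ hx
  rw [h.mq_sum]
  refine Finset.sum_nonpos fun i _ => ?_
  by_cases hP : 0 < μ i
  · simp [hc0 i (by simpa using hP)]
  · push_neg at hP
    exact mul_nonpos_of_nonpos_of_nonneg hP (mul_nonneg (sq_nonneg _) (h.norm_pos i).le)

end PinDev

namespace PinDev
variable {n m : Type*} [Fintype n] [DecidableEq n] [Fintype m] [DecidableEq m]
variable {M : Matrix n n ℝ} {v : n → n → ℝ} {μ : n → ℝ}

lemma card_indep {α : Type*} (i1 i2 : Fintype α) :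
    @Fintype.card α i1 = @Fintype.card α i2 := by
  congr 1; exact Subsingleton.elim _ _

/-- a subspace on which the form is positive definite -/
def PosOn (M : Matrix n n ℝ) (W : Submodule ℝ (n → ℝ)) : Prop :=
  ∀ x ∈ W, x ≠ 0 → 0 < x ⬝ᵥ M *ᵥ x

lemma posOn_espan (h : OrthoEigen M v μ) : PosOn M (espan v (fun i => 0 < μ i)) :=
  fun _ hx hx0 => espan_mq_pos h hx hx0

lemma finrank_le_of_posOn (h : OrthoEigen M v μ) {W : Submodule ℝ (n → ℝ)}
    (hW : PosOn M W) : Module.finrank ℝ W ≤ Fintype.card {i // 0 < μ i} := by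
  set V := espan v (fun i => ¬ 0 < μ i) with hV
  have hdisj : W ⊓ V = ⊥ := by
    rw [Submodule.eq_bot_iff]
    intro x hx
    by_contra hx0
    have h1 := hW x hx.1 hx0
    have h2 := espan_mq_nonpos h hx.2
    linarith
  have hsum := Submodule.finrank_sup_add_finrank_inf_eq W V
  rw [hdisj] at hsum
  have htot : Module.finrank ℝ ↥(W ⊔ V) ≤ Fintype.card n := by
    have := Submodule.finrank_le (W ⊔ V)
    simpa [Module.finrank_pi] using this
  have hVr : Module.finrank ℝ V = Fintype.card {i // ¬ 0 < μ i} := (finrank_espan h _).trans (card_indep _ _)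
  have hsplit : Fintype.card {i // 0 < μ i} + Fintype.card {i // ¬ 0 < μ i}
      = Fintype.card n := by
    rw [← Fintype.card_sum]
    exact Fintype.card_congr (Equiv.sumCompl _)
  simp only [finrank_bot, add_zero] at hsum
  omega

/-- two orthogonal eigenfamilies give the same positive count -/
lemma count_eq {w : n → n → ℝ} {ν : n → ℝ}
    (h : OrthoEigen M v μ) (h' : OrthoEigen M w ν) :
    Fintype.card {i // 0 < μ i} = Fintype.card {i // 0 < ν i} := by
  have h1 : Fintype.card {i // 0 < μ i} ≤ Fintype.card {i // 0 < ν i} := by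
    have := finrank_le_of_posOn h' (posOn_espan h)
    rwa [finrank_espan h] at this
  have h2 : Fintype.card {i // 0 < ν i} ≤ Fintype.card {i // 0 < μ i} := by
    have := finrank_le_of_posOn h (posOn_espan h')
    rwa [finrank_espan h'] at this
  omega

/-- the eigenfamily of a hermitian matrix -/
lemma IsHermitian.orthoEigen (hM : M.IsHermitian) :
    OrthoEigen M (fun j => ⇑(hM.eigenvectorBasis j)) hM.eigenvalues := by
  refine ⟨?_, ?_, fun i => hM.mulVec_eigenvectorBasis i⟩
  · intro i j hij
    have := hM.eigenvectorBasis.orthonormal.2 hij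
    simpa [PiLp.inner_apply, RCLike.inner_apply, dotProduct, mul_comm] using this
  · intro i
    have h1 := hM.eigenvectorBasis.orthonormal.1 i
    have h2 : (inner ℝ (hM.eigenvectorBasis i) (hM.eigenvectorBasis i) : ℝ) = 1 := by
      rw [real_inner_self_eq_norm_sq, h1]; norm_num
    have h3 : (fun j => ⇑(hM.eigenvectorBasis j)) i ⬝ᵥ (fun j => ⇑(hM.eigenvectorBasis j)) i
        = 1 := by
      simp only [PiLp.inner_apply, RCLike.inner_apply, conj_trivial] at h2
      simpa [dotProduct] using h2
    rw [h3]
    norm_num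

end PinDev

namespace PinDev
variable {n m : Type*} [Fintype n] [DecidableEq n] [Fintype m] [DecidableEq m]

lemma posCount_transfer {M : Matrix m m ℝ} {N : Matrix n n ℝ}
    (hM : M.IsHermitian) (hN : N.IsHermitian)
    (f : (n → ℝ) →ₗ[ℝ] (m → ℝ)) (hf : Function.Surjective f)
    (hc : ∀ y, (f y) ⬝ᵥ M *ᵥ (f y) = y ⬝ᵥ N *ᵥ y) :
    Fintype.card {i // 0 < hM.eigenvalues i} = Fintype.card {i // 0 < hN.eigenvalues i} := by
  have hOM := IsHermitian.orthoEigen hM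
  have hON := IsHermitian.orthoEigen hN
  -- direction 1 : card N ≤ card M
  have h1 : Fintype.card {i // 0 < hN.eigenvalues i} ≤ Fintype.card {i // 0 < hM.eigenvalues i} := by
    set W' := espan (fun j => ⇑(hN.eigenvectorBasis j)) (fun i => 0 < hN.eigenvalues i) with hW'
    have hpos' := posOn_espan hON
    have hWpos : PosOn M (W'.map f) := by
      rintro x hx hx0
      obtain ⟨y, hy, rfl⟩ := Submodule.mem_map.1 hx
      have hy0 : y ≠ 0 := by rintro rfl; simp at hx0
      rw [hc y]
      exact hpos' y hy hy0
    have hinj : Function.Injective (f ∘ₗ W'.subtype) := by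
      rw [← LinearMap.ker_eq_bot, Submodule.eq_bot_iff]
      rintro ⟨y, hy⟩ hker
      simp only [LinearMap.mem_ker, LinearMap.comp_apply, Submodule.subtype_apply] at hker
      ext : 1
      by_contra hy0
      have := hpos' y hy hy0
      rw [← hc y, hker] at this
      simp at this
    have hr : Module.finrank ℝ (W'.map f) = Module.finrank ℝ W' := by
      have := LinearMap.finrank_range_of_inj hinj
      rwa [LinearMap.range_comp, Submodule.range_subtype] at this
    have hb := finrank_le_of_posOn hOM hWpos
    rw [hr, hW', finrank_espan hON] at hb
    exact le_trans (le_of_eq (@Fintype.card_congr _ _ _ _ (Equiv.refl _))) (le_trans hb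
      (le_of_eq (@Fintype.card_congr _ _ _ _ (Equiv.refl _))))
  -- direction 2 : card M ≤ card N
  have h2 : Fintype.card {i // 0 < hM.eigenvalues i} ≤ Fintype.card {i // 0 < hN.eigenvalues i} := by
    obtain ⟨g, hgf⟩ := f.exists_rightInverse_of_surjective (LinearMap.range_eq_top.2 hf)
    have hfg : ∀ x, f (g x) = x := fun x => by
      rw [← LinearMap.comp_apply, hgf, LinearMap.id_apply]
    set W := espan (fun j => ⇑(hM.eigenvectorBasis j)) (fun i => 0 < hM.eigenvalues i) with hW
    have hpos := posOn_espan hOM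
    have hWpos : PosOn N (W.map g) := by
      rintro x hx hx0
      obtain ⟨y, hy, rfl⟩ := Submodule.mem_map.1 hx
      have hy0 : y ≠ 0 := by rintro rfl; simp at hx0
      have := hc (g y)
      rw [hfg y] at this
      rw [← this]
      exact hpos y hy hy0
    have hr : Module.finrank ℝ W ≤ Module.finrank ℝ (W.map g) := by
      have hmap : (W.map g).map f = W := by
        rw [← Submodule.map_comp, hgf, Submodule.map_id]
      conv_lhs => rw [← hmap]
      exact Submodule.finrank_map_le f (W.map g)
    have hb := finrank_le_of_posOn hON hWpos
    have hre : Module.finrank ℝ W = Fintype.card {i // 0 < hM.eigenvalues i} :=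
      (finrank_espan hOM _).trans (@Fintype.card_congr _ _ _ _ (Equiv.refl _))
    calc Fintype.card {i // 0 < hM.eigenvalues i} = Module.finrank ℝ W := hre.symm
      _ ≤ Module.finrank ℝ (W.map g) := hr
      _ ≤ _ := le_trans hb (le_of_eq (@Fintype.card_congr _ _ _ _ (Equiv.refl _)))
  omega

end PinDev

namespace PinDev
variable {n m : Type*} [Fintype n] [DecidableEq n] [Fintype m] [DecidableEq m]
variable {M : Matrix n n ℝ} {v : n → n → ℝ} {μ : n → ℝ}

lemma posCount_eq (hM : M.IsHermitian) (h : OrthoEigen M v μ) :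
    Fintype.card {i // 0 < hM.eigenvalues i} = Fintype.card {i // 0 < μ i} :=
  (count_eq (IsHermitian.orthoEigen hM) h).trans (@Fintype.card_congr _ _ _ _ (Equiv.refl _))

lemma negCount_eq (hM : M.IsHermitian) (h : OrthoEigen M v μ) :
    Fintype.card {i // hM.eigenvalues i < 0} = Fintype.card {i // μ i < 0} := by
  have h1 := count_eq (IsHermitian.orthoEigen hM.neg) h.neg
  have h2 := count_eq (IsHermitian.orthoEigen hM.neg) ((IsHermitian.orthoEigen hM).neg)
  have e1 : {i // 0 < (-μ) i} ≃ {i // μ i < 0} :=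
    Equiv.subtypeEquivRight fun i => by simp [neg_pos]
  have e2 : {i // 0 < (-hM.eigenvalues) i} ≃ {i // hM.eigenvalues i < 0} :=
    Equiv.subtypeEquivRight fun i => by simp [neg_pos]
  calc Fintype.card {i // hM.eigenvalues i < 0}
      = Fintype.card {i // 0 < (-hM.eigenvalues) i} := (@Fintype.card_congr _ _ _ _ e2).symm
    _ = Fintype.card {i // 0 < hM.neg.eigenvalues i} := h2.symm
    _ = Fintype.card {i // 0 < (-μ) i} := h1
    _ = Fintype.card {i // μ i < 0} := @Fintype.card_congr _ _ _ _ e1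

lemma negCount_aux (hM : M.IsHermitian) :
    Fintype.card {i // hM.eigenvalues i < 0}
      = Fintype.card {i // 0 < hM.neg.eigenvalues i} := by
  have h := count_eq (IsHermitian.orthoEigen hM.neg) ((IsHermitian.orthoEigen hM).neg)
  have e : {i // 0 < (-hM.eigenvalues) i} ≃ {i // hM.eigenvalues i < 0} :=
    Equiv.subtypeEquivRight fun i => by simp [neg_pos]
  calc Fintype.card {i // hM.eigenvalues i < 0}
      = Fintype.card {i // 0 < (-hM.eigenvalues) i} := (@Fintype.card_congr _ _ _ _ e).symm
    _ = Fintype.card {i // 0 < hM.neg.eigenvalues i} :=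
        h.symm.trans (@Fintype.card_congr _ _ _ _ (Equiv.refl _))

lemma negCount_transfer {M : Matrix m m ℝ} {N : Matrix n n ℝ}
    (hM : M.IsHermitian) (hN : N.IsHermitian)
    (f : (n → ℝ) →ₗ[ℝ] (m → ℝ)) (hf : Function.Surjective f)
    (hc : ∀ y, (f y) ⬝ᵥ M *ᵥ (f y) = y ⬝ᵥ N *ᵥ y) :
    Fintype.card {i // hM.eigenvalues i < 0} = Fintype.card {i // hN.eigenvalues i < 0} := by
  have hc' : ∀ y, (f y) ⬝ᵥ (-M) *ᵥ (f y) = y ⬝ᵥ (-N) *ᵥ y := by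
    intro y
    rw [neg_mulVec, neg_mulVec, dotProduct_neg, dotProduct_neg, hc y]
  rw [negCount_aux hM, negCount_aux hN]
  exact posCount_transfer hM.neg hN.neg f hf hc'

end PinDev

namespace PinDev
variable {n m : Type*} [Fintype n] [DecidableEq n] [Fintype m] [DecidableEq m]

lemma orthoEigen_fromBlocks {B : Matrix n n ℝ} {C : Matrix m m ℝ}
    {vB : n → n → ℝ} {μB : n → ℝ} {vC : m → m → ℝ} {μC : m → ℝ}
    (hB : OrthoEigen B vB μB) (hC : OrthoEigen C vC μC) :
    OrthoEigen (fromBlocks B 0 0 C)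
      (Sum.elim (fun i => Sum.elim (vB i) 0) (fun j => Sum.elim 0 (vC j)))
      (Sum.elim μB μC) := by
  constructor
  · rintro (i | i) (j | j) hij <;>
      simp only [Sum.elim_inl, Sum.elim_inr, sumElim_dotProduct_sumElim,
        dotProduct_zero, zero_dotProduct, add_zero, zero_add]
    · exact hB.orth i j (fun h => hij (by rw [h]))
    · exact hC.orth i j (fun h => hij (by rw [h]))
  · rintro (i | i) <;>
      simp only [Sum.elim_inl, Sum.elim_inr, sumElim_dotProduct_sumElim,
        dotProduct_zero, zero_dotProduct, add_zero, zero_add]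
    · exact hB.norm_pos i
    · exact hC.norm_pos i
  · rintro (i | i)
    · rw [Sum.elim_inl, Matrix.fromBlocks_mulVec]
      funext x; cases x <;> simp [hB.eig i]
    · rw [Sum.elim_inr, Matrix.fromBlocks_mulVec]
      funext x; cases x <;> simp [hC.eig i]

lemma card_sum_subtype (μB : n → ℝ) (μC : m → ℝ) :
    Fintype.card {x : n ⊕ m // 0 < Sum.elim μB μC x}
      = Fintype.card {i // 0 < μB i} + Fintype.card {i // 0 < μC i} := by
  rw [@Fintype.card_congr _ _ _ _ (Equiv.subtypeSum (p := fun x => 0 < Sum.elim μB μC x)),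
    @Fintype.card_sum]
  congr 1 <;>
    exact @Fintype.card_congr _ _ _ _ (Equiv.subtypeEquivRight fun i => by simp)

lemma card_sum_subtype_neg (μB : n → ℝ) (μC : m → ℝ) :
    Fintype.card {x : n ⊕ m // Sum.elim μB μC x < 0}
      = Fintype.card {i // μB i < 0} + Fintype.card {i // μC i < 0} := by
  rw [@Fintype.card_congr _ _ _ _ (Equiv.subtypeSum (p := fun x => Sum.elim μB μC x < 0)),
    @Fintype.card_sum]
  congr 1 <;>
    exact @Fintype.card_congr _ _ _ _ (Equiv.subtypeEquivRight fun i => by simp)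

lemma isHermitian_fromBlocks {B : Matrix n n ℝ} {C : Matrix m m ℝ}
    (hB : B.IsHermitian) (hC : C.IsHermitian) :
    (fromBlocks B 0 0 C).IsHermitian := by
  unfold Matrix.IsHermitian
  rw [Matrix.fromBlocks_conjTranspose, hB.eq, hC.eq]
  simp only [Matrix.conjTranspose_zero]

lemma posCount_fromBlocks {B : Matrix n n ℝ} {C : Matrix m m ℝ}
    (hB : B.IsHermitian) (hC : C.IsHermitian) :
    Fintype.card {i // 0 < (isHermitian_fromBlocks hB hC).eigenvalues i}
      = Fintype.card {i // 0 < hB.eigenvalues i}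
        + Fintype.card {i // 0 < hC.eigenvalues i} := by
  rw [posCount_eq (isHermitian_fromBlocks hB hC)
    (orthoEigen_fromBlocks (IsHermitian.orthoEigen hB) (IsHermitian.orthoEigen hC))]
  rw [card_sum_subtype]

lemma negCount_fromBlocks {B : Matrix n n ℝ} {C : Matrix m m ℝ}
    (hB : B.IsHermitian) (hC : C.IsHermitian) :
    Fintype.card {i // (isHermitian_fromBlocks hB hC).eigenvalues i < 0}
      = Fintype.card {i // hB.eigenvalues i < 0}
        + Fintype.card {i // hC.eigenvalues i < 0} := by
  rw [negCount_eq (isHermitian_fromBlocks hB hC)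
    (orthoEigen_fromBlocks (IsHermitian.orthoEigen hB) (IsHermitian.orthoEigen hC))]
  rw [card_sum_subtype_neg]

end PinDev


namespace PinDev
variable {n m : Type*} [Fintype n] [DecidableEq n] [Fintype m] [DecidableEq m]

lemma pin_eq {M : Matrix n n ℝ} (hM : M.IsHermitian) :
    pin M = (Fintype.card {i // 0 < hM.eigenvalues i},
      Fintype.card {i // hM.eigenvalues i < 0}) := by
  unfold pin
  rw [dif_pos hM]

lemma pin_transfer {M : Matrix m m ℝ} {N : Matrix n n ℝ}
    (hM : M.IsHermitian) (hN : N.IsHermitian)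
    (f : (n → ℝ) →ₗ[ℝ] (m → ℝ)) (hf : Function.Surjective f)
    (hc : ∀ y, (f y) ⬝ᵥ M *ᵥ (f y) = y ⬝ᵥ N *ᵥ y) :
    pin M = pin N := by
  rw [pin_eq hM, pin_eq hN]
  refine Prod.ext ?_ ?_
  · exact (card_indep _ _).trans ((posCount_transfer hM hN f hf hc).trans (card_indep _ _))
  · exact (card_indep _ _).trans ((negCount_transfer hM hN f hf hc).trans (card_indep _ _))

lemma pin_fromBlocks {B : Matrix n n ℝ} {C : Matrix m m ℝ}
    (hB : B.IsHermitian) (hC : C.IsHermitian) :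
    pin (fromBlocks B 0 0 C) = ((pin B).1 + (pin C).1, (pin B).2 + (pin C).2) := by
  rw [pin_eq (isHermitian_fromBlocks hB hC), pin_eq hB, pin_eq hC]
  refine Prod.ext ?_ ?_
  · exact (card_indep _ _).trans ((posCount_fromBlocks hB hC).trans
      (by exact congrArg₂ (· + ·) (card_indep _ _) (card_indep _ _)))
  · exact (card_indep _ _).trans ((negCount_fromBlocks hB hC).trans
      (by exact congrArg₂ (· + ·) (card_indep _ _) (card_indep _ _)))

lemma isHermitian_H : (!![(0:ℝ), 1; 1, 0]).IsHermitian := by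
  unfold Matrix.IsHermitian
  ext i j
  fin_cases i <;> fin_cases j <;> simp [Matrix.conjTranspose_apply]

lemma orthoEigen_H : OrthoEigen (!![(0:ℝ), 1; 1, 0]) ![![1,1], ![1,-1]] ![1,-1] := by
  constructor
  · intro i j hij
    fin_cases i <;> fin_cases j <;>
      simp_all [dotProduct, Fin.sum_univ_two] <;> norm_num
  · intro i
    fin_cases i <;> simp [dotProduct, Fin.sum_univ_two] <;> norm_num
  · intro i
    fin_cases i <;> funext x <;> fin_cases x <;>
      simp [Matrix.mulVec, dotProduct, Fin.sum_univ_two] <;> norm_num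

lemma pin_H : pin (!![(0:ℝ), 1; 1, 0]) = (1, 1) := by
  rw [pin_eq isHermitian_H]
  refine Prod.ext ?_ ?_
  · rw [(card_indep _ _).trans (posCount_eq isHermitian_H orthoEigen_H)]
    rw [Fintype.card_eq_one_iff]
    refine ⟨⟨0, by norm_num⟩, ?_⟩
    rintro ⟨i, hi⟩
    fin_cases i
    · rfl
    · exfalso; norm_num at hi
  · rw [(card_indep _ _).trans (negCount_eq isHermitian_H orthoEigen_H)]
    rw [Fintype.card_eq_one_iff]
    refine ⟨⟨1, by norm_num⟩, ?_⟩
    rintro ⟨i, hi⟩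
    fin_cases i
    · exfalso; norm_num at hi
    · rfl

end PinDev

namespace PinDev

lemma mq_fromBlocks {p q : Type*} [Fintype p] [Fintype q]
    (A : Matrix p p ℝ) (B : Matrix p q ℝ) (C : Matrix q p ℝ) (D : Matrix q q ℝ)
    (x : p ⊕ q → ℝ) :
    x ⬝ᵥ (fromBlocks A B C D) *ᵥ x =
      (x ∘ Sum.inl) ⬝ᵥ A *ᵥ (x ∘ Sum.inl) + (x ∘ Sum.inl) ⬝ᵥ B *ᵥ (x ∘ Sum.inr)
      + (x ∘ Sum.inr) ⬝ᵥ C *ᵥ (x ∘ Sum.inl) + (x ∘ Sum.inr) ⬝ᵥ D *ᵥ (x ∘ Sum.inr) := by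
  conv_lhs => rw [← Sum.elim_comp_inl_inr x]
  rw [Matrix.fromBlocks_mulVec, sumElim_dotProduct_sumElim,
    dotProduct_add, dotProduct_add]
  simp only [Sum.elim_comp_inl, Sum.elim_comp_inr]
  ring

variable {k r : ℕ}

/-- the correcting scalar functional -/
noncomputable def sL (A₂₁ : Matrix (Fin 1) (Fin k) ℝ) (A₂₃ : Matrix (Fin 1) (Fin r) ℝ)
    (a₂₂ z : ℝ) : ((Fin 2 ⊕ (Fin k ⊕ Fin r)) → ℝ) →ₗ[ℝ] ℝ :=
  z⁻¹ • (LinearMap.proj (Sum.inl 1)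
    - LinearMap.proj 0 ∘ₗ A₂₁.mulVecLin ∘ₗ LinearMap.funLeft ℝ ℝ (Sum.inr ∘ Sum.inl)
    - LinearMap.proj 0 ∘ₗ A₂₃.mulVecLin ∘ₗ LinearMap.funLeft ℝ ℝ (Sum.inr ∘ Sum.inr)
    - (a₂₂ / 2) • LinearMap.proj (Sum.inl 0))

lemma sL_apply (A₂₁ : Matrix (Fin 1) (Fin k) ℝ) (A₂₃ : Matrix (Fin 1) (Fin r) ℝ)
    (a₂₂ z : ℝ) (y : (Fin 2 ⊕ (Fin k ⊕ Fin r)) → ℝ) :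
    sL A₂₁ A₂₃ a₂₂ z y
      = z⁻¹ * (y (Sum.inl 1) - (A₂₁ *ᵥ (y ∘ Sum.inr ∘ Sum.inl)) 0
          - (A₂₃ *ᵥ (y ∘ Sum.inr ∘ Sum.inr)) 0 - a₂₂ / 2 * y (Sum.inl 0)) := by
  simp only [sL, LinearMap.smul_apply, LinearMap.sub_apply, LinearMap.proj_apply,
    LinearMap.comp_apply, Matrix.mulVecLin_apply, smul_eq_mul, Pi.smul_apply]
  congr 2 <;> rfl

/-- the congruence-like surjection -/
noncomputable def Fmap (A₂₁ : Matrix (Fin 1) (Fin k) ℝ) (A₂₃ : Matrix (Fin 1) (Fin r) ℝ)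
    (a₂₂ z : ℝ) (u : Fin k ⊕ Fin r → ℝ) :
    ((Fin 2 ⊕ (Fin k ⊕ Fin r)) → ℝ) →ₗ[ℝ] ((Fin k ⊕ (Fin 1 ⊕ Fin r)) → ℝ) where
  toFun y := Sum.elim
      (fun i => y (Sum.inr (Sum.inl i)) + sL A₂₁ A₂₃ a₂₂ z y * u (Sum.inl i))
      (Sum.elim (fun _ => y (Sum.inl 0))
        (fun j => y (Sum.inr (Sum.inr j)) + sL A₂₁ A₂₃ a₂₂ z y * u (Sum.inr j)))
  map_add' y y' := by
    funext x
    rcases x with i | (i | j) <;>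
      simp [map_add, Pi.add_apply] <;> ring
  map_smul' c y := by
    funext x
    rcases x with i | (i | j) <;>
      simp [_root_.map_smul, Pi.smul_apply, smul_eq_mul] <;> ring

end PinDev

namespace PinDev
variable {k r : ℕ}

lemma Fmap_compat (A₁₁ : Matrix (Fin k) (Fin k) ℝ) (A₃₃ : Matrix (Fin r) (Fin r) ℝ)
    (A₂₁ : Matrix (Fin 1) (Fin k) ℝ) (A₂₃ : Matrix (Fin 1) (Fin r) ℝ) (a₂₂ : ℝ)
    (h11 : A₁₁ᵀ = A₁₁) (h33 : A₃₃ᵀ = A₃₃) (u : Fin k ⊕ Fin r → ℝ)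
    (hu1 : A₁₁ *ᵥ (u ∘ Sum.inl) = 0) (hu3 : A₃₃ *ᵥ (u ∘ Sum.inr) = 0)
    {z : ℝ} (hz : z ≠ 0)
    (hzu : (A₂₁ *ᵥ (u ∘ Sum.inl)) 0 + (A₂₃ *ᵥ (u ∘ Sum.inr)) 0 = z)
    (y : (Fin 2 ⊕ (Fin k ⊕ Fin r)) → ℝ)
    (w : (Fin k ⊕ (Fin 1 ⊕ Fin r)) → ℝ)
    (hw : w = Sum.elim ((y ∘ Sum.inr ∘ Sum.inl) + sL A₂₁ A₂₃ a₂₂ z y • (u ∘ Sum.inl))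
      (Sum.elim (fun _ => y (Sum.inl 0))
        ((y ∘ Sum.inr ∘ Sum.inr) + sL A₂₁ A₂₃ a₂₂ z y • (u ∘ Sum.inr)))) :
    w ⬝ᵥ (fromBlocks A₁₁ (fromCols A₂₁ᵀ 0) (fromRows A₂₁ 0)
          (fromBlocks (!![a₂₂]) A₂₃ A₂₃ᵀ A₃₃)) *ᵥ w
      = y ⬝ᵥ (fromBlocks (!![(0:ℝ), 1; 1, 0]) 0 0 (fromBlocks A₁₁ 0 0 A₃₃)) *ᵥ y := by
  subst hw
  rw [mq_fromBlocks, mq_fromBlocks, mq_fromBlocks, mq_fromBlocks]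
  simp only [Sum.elim_comp_inl, Sum.elim_comp_inr, Function.comp_assoc]
  rw [Matrix.fromCols_mulVec_sumElim, Matrix.fromRows_mulVec,
    sumElim_dotProduct_sumElim]
  simp only [Matrix.zero_mulVec, add_zero, dotProduct_zero, zero_dotProduct]
  set s := sL A₂₁ A₂₃ a₂₂ z y with hs
  set y1 := y ∘ Sum.inr ∘ Sum.inl with hy1
  set y3 := y ∘ Sum.inr ∘ Sum.inr with hy3
  set u1 := u ∘ Sum.inl with hu1d
  set u3 := u ∘ Sum.inr with hu3d
  have key1 : u1 ⬝ᵥ A₁₁ *ᵥ y1 = 0 := by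
    rw [Matrix.dotProduct_mulVec, ← h11, Matrix.vecMul_transpose, hu1, zero_dotProduct]
  have key3 : u3 ⬝ᵥ A₃₃ *ᵥ y3 = 0 := by
    rw [Matrix.dotProduct_mulVec, ← h33, Matrix.vecMul_transpose, hu3, zero_dotProduct]
  have h1 : (y1 + s • u1) ⬝ᵥ A₁₁ *ᵥ (y1 + s • u1) = y1 ⬝ᵥ A₁₁ *ᵥ y1 := by
    rw [Matrix.mulVec_add, Matrix.mulVec_smul, hu1, smul_zero, add_zero, add_dotProduct,
      smul_dotProduct, key1, smul_zero, add_zero]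
  have h3 : (y3 + s • u3) ⬝ᵥ A₃₃ *ᵥ (y3 + s • u3) = y3 ⬝ᵥ A₃₃ *ᵥ y3 := by
    rw [Matrix.mulVec_add, Matrix.mulVec_smul, hu3, smul_zero, add_zero, add_dotProduct,
      smul_dotProduct, key3, smul_zero, add_zero]
  have hB : (y1 + s • u1) ⬝ᵥ A₂₁ᵀ *ᵥ (fun _ => y (Sum.inl 0))
      = y (Sum.inl 0) * ((A₂₁ *ᵥ y1) 0 + s * (A₂₁ *ᵥ u1) 0) := by
    rw [Matrix.dotProduct_mulVec, Matrix.vecMul_transpose, Matrix.mulVec_add,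
      Matrix.mulVec_smul]
    simp [dotProduct, Fin.sum_univ_one, Pi.add_apply, Pi.smul_apply, smul_eq_mul]
    ring
  have hC : (fun _ : Fin 1 => y (Sum.inl 0)) ⬝ᵥ A₂₁ *ᵥ (y1 + s • u1)
      = y (Sum.inl 0) * ((A₂₁ *ᵥ y1) 0 + s * (A₂₁ *ᵥ u1) 0) := by
    rw [Matrix.mulVec_add, Matrix.mulVec_smul]
    simp [dotProduct, Fin.sum_univ_one, Pi.add_apply, Pi.smul_apply, smul_eq_mul]
  have hB3 : (fun _ : Fin 1 => y (Sum.inl 0)) ⬝ᵥ A₂₃ *ᵥ (y3 + s • u3)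
      = y (Sum.inl 0) * ((A₂₃ *ᵥ y3) 0 + s * (A₂₃ *ᵥ u3) 0) := by
    rw [Matrix.mulVec_add, Matrix.mulVec_smul]
    simp [dotProduct, Fin.sum_univ_one, Pi.add_apply, Pi.smul_apply, smul_eq_mul]
  have hC3 : (y3 + s • u3) ⬝ᵥ A₂₃ᵀ *ᵥ (fun _ => y (Sum.inl 0))
      = y (Sum.inl 0) * ((A₂₃ *ᵥ y3) 0 + s * (A₂₃ *ᵥ u3) 0) := by
    rw [Matrix.dotProduct_mulVec, Matrix.vecMul_transpose, Matrix.mulVec_add,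
      Matrix.mulVec_smul]
    simp [dotProduct, Fin.sum_univ_one, Pi.add_apply, Pi.smul_apply, smul_eq_mul]
    ring
  have ha : (fun _ : Fin 1 => y (Sum.inl 0)) ⬝ᵥ !![a₂₂] *ᵥ (fun _ => y (Sum.inl 0))
      = a₂₂ * (y (Sum.inl 0) * y (Sum.inl 0)) := by
    simp [Matrix.mulVec, dotProduct, Fin.sum_univ_one]
    ring
  have hH : (y ∘ Sum.inl) ⬝ᵥ !![(0:ℝ), 1; 1, 0] *ᵥ (y ∘ Sum.inl)
      = 2 * (y (Sum.inl 0) * y (Sum.inl 1)) := by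
    simp [Matrix.mulVec, dotProduct, Fin.sum_univ_two]
    ring
  have hsz : s * z = y (Sum.inl 1) - (A₂₁ *ᵥ y1) 0 - (A₂₃ *ᵥ y3) 0
      - a₂₂ / 2 * y (Sum.inl 0) := by
    rw [hs, sL_apply, hy1, hy3]
    field_simp
  rw [h1, h3, hB, hC, hB3, hC3, ha, hH]
  linear_combination (2 * y (Sum.inl 0)) * hsz + (2 * y (Sum.inl 0) * s) * hzu

end PinDev

namespace PinDev
variable {k r : ℕ}

lemma Fmap_apply_eq (A₂₁ : Matrix (Fin 1) (Fin k) ℝ) (A₂₃ : Matrix (Fin 1) (Fin r) ℝ)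
    (a₂₂ z : ℝ) (u : Fin k ⊕ Fin r → ℝ) (y : (Fin 2 ⊕ (Fin k ⊕ Fin r)) → ℝ) :
    Fmap A₂₁ A₂₃ a₂₂ z u y
      = Sum.elim ((y ∘ Sum.inr ∘ Sum.inl) + sL A₂₁ A₂₃ a₂₂ z y • (u ∘ Sum.inl))
          (Sum.elim (fun _ => y (Sum.inl 0))
            ((y ∘ Sum.inr ∘ Sum.inr) + sL A₂₁ A₂₃ a₂₂ z y • (u ∘ Sum.inr))) := by
  funext x
  rcases x with i | (i | j) <;>
    simp [Fmap, Pi.add_apply, Pi.smul_apply, smul_eq_mul, mul_comm]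

lemma Fmap_surjective (A₂₁ : Matrix (Fin 1) (Fin k) ℝ) (A₂₃ : Matrix (Fin 1) (Fin r) ℝ)
    (a₂₂ : ℝ) {z : ℝ} (hz : z ≠ 0) (u : Fin k ⊕ Fin r → ℝ) :
    Function.Surjective (Fmap A₂₁ A₂₃ a₂₂ z u) := by
  intro x
  refine ⟨Sum.elim
    ![x (Sum.inr (Sum.inl 0)),
      (A₂₁ *ᵥ (x ∘ Sum.inl)) 0 + (A₂₃ *ᵥ (x ∘ Sum.inr ∘ Sum.inr)) 0
        + a₂₂ / 2 * x (Sum.inr (Sum.inl 0))]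
    (Sum.elim (x ∘ Sum.inl) (x ∘ Sum.inr ∘ Sum.inr)), ?_⟩
  set g := Sum.elim
    ![x (Sum.inr (Sum.inl 0)),
      (A₂₁ *ᵥ (x ∘ Sum.inl)) 0 + (A₂₃ *ᵥ (x ∘ Sum.inr ∘ Sum.inr)) 0
        + a₂₂ / 2 * x (Sum.inr (Sum.inl 0))]
    (Sum.elim (x ∘ Sum.inl) (x ∘ Sum.inr ∘ Sum.inr)) with hg
  have hscal : sL A₂₁ A₂₃ a₂₂ z g = 0 := by
    rw [sL_apply]
    have e1 : g ∘ Sum.inr ∘ Sum.inl = x ∘ Sum.inl := rfl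
    have e2 : g ∘ Sum.inr ∘ Sum.inr = x ∘ Sum.inr ∘ Sum.inr := rfl
    have e3 : g (Sum.inl 1) = (A₂₁ *ᵥ (x ∘ Sum.inl)) 0 + (A₂₃ *ᵥ (x ∘ Sum.inr ∘ Sum.inr)) 0
        + a₂₂ / 2 * x (Sum.inr (Sum.inl 0)) := by
      rw [hg]; simp
    have e4 : g (Sum.inl 0) = x (Sum.inr (Sum.inl 0)) := by rw [hg]; simp
    rw [e1, e2, e3, e4]
    ring
  rw [Fmap_apply_eq, hscal]
  funext w
  rcases w with i | (i | j)
  · simp only [Sum.elim_inl, Pi.add_apply, Pi.smul_apply, smul_eq_mul, zero_mul,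
      zero_smul, add_zero]
    rfl
  · have : i = 0 := Subsingleton.elim i 0
    subst this
    simp [hg]
  · simp only [Sum.elim_inr, Pi.add_apply, Pi.smul_apply, smul_eq_mul, zero_mul,
      zero_smul, add_zero]
    rfl

lemma conjT_real {p q : Type*} (X : Matrix p q ℝ) : Xᴴ = Xᵀ := by
  ext i j
  simp [Matrix.conjTranspose_apply]

lemma transpose_one_one (a : ℝ) : (!![a])ᵀ = !![a] := by
  ext i j
  fin_cases i <;> fin_cases j <;> rfl

end PinDev


open PinDev

/-- Let `A₁₁`, `A₃₃` be symmetric, `A₂₁`, `A₂₃` row vectors and `a₂₂` a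
scalar, and suppose some `u ∈ ker (diag(A₁₁, A₃₃))` satisfies `[A₂₁, A₂₃] u ≠ 0`.  Then
`A = [[A₁₁, A₂₁ᵀ, 0],[A₂₁, a₂₂, A₂₃],[0, A₂₃ᵀ, A₃₃]]` has the same partial inertia as
`H ⊕ A₁₁ ⊕ A₃₃` (`H = [[0,1],[1,0]]`); in particular
`pin A = pin A₁₁ + pin A₃₃ + (1,1)`. -/
theorem stmt19 {k r : ℕ}
    (A₁₁ : Matrix (Fin k) (Fin k) ℝ) (A₃₃ : Matrix (Fin r) (Fin r) ℝ)
    (A₂₁ : Matrix (Fin 1) (Fin k) ℝ) (A₂₃ : Matrix (Fin 1) (Fin r) ℝ) (a₂₂ : ℝ)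
    (h11 : A₁₁ᵀ = A₁₁) (h33 : A₃₃ᵀ = A₃₃)
    (u : Fin k ⊕ Fin r → ℝ)
    (hu : (fromBlocks A₁₁ 0 0 A₃₃).mulVec u = 0)
    (hz : (fromCols A₂₁ A₂₃).mulVec u ≠ 0) :
    pin (fromBlocks A₁₁ (fromCols A₂₁ᵀ 0) (fromRows A₂₁ 0)
          (fromBlocks (!![a₂₂]) A₂₃ A₂₃ᵀ A₃₃)) =
      pin (fromBlocks (!![(0:ℝ), 1; 1, 0]) 0 0 (fromBlocks A₁₁ 0 0 A₃₃)) ∧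
    pin (fromBlocks A₁₁ (fromCols A₂₁ᵀ 0) (fromRows A₂₁ 0)
          (fromBlocks (!![a₂₂]) A₂₃ A₂₃ᵀ A₃₃)) =
      ((pin A₁₁).1 + (pin A₃₃).1 + 1, (pin A₁₁).2 + (pin A₃₃).2 + 1) := by
  have h11h : A₁₁.IsHermitian := by
    unfold Matrix.IsHermitian
    rw [conjT_real]; exact h11
  have h33h : A₃₃.IsHermitian := by
    unfold Matrix.IsHermitian
    rw [conjT_real]; exact h33
  have hN : (fromBlocks (!![(0:ℝ), 1; 1, 0]) 0 0 (fromBlocks A₁₁ 0 0 A₃₃)).IsHermitian :=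
    isHermitian_fromBlocks isHermitian_H (isHermitian_fromBlocks h11h h33h)
  have hM : (fromBlocks A₁₁ (fromCols A₂₁ᵀ 0) (fromRows A₂₁ 0)
      (fromBlocks (!![a₂₂]) A₂₃ A₂₃ᵀ A₃₃)).IsHermitian := by
    unfold Matrix.IsHermitian
    rw [conjT_real, Matrix.fromBlocks_transpose, Matrix.transpose_fromCols,
      Matrix.transpose_fromRows, Matrix.fromBlocks_transpose, Matrix.transpose_transpose,
      transpose_one_one, h11, h33, Matrix.transpose_zero, Matrix.transpose_transpose,
      Matrix.transpose_zero]
  -- kernel components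
  have hu' := hu
  rw [← Sum.elim_comp_inl_inr u, Matrix.fromBlocks_mulVec] at hu'
  have hu1 : A₁₁ *ᵥ (u ∘ Sum.inl) = 0 := by
    funext i
    have := congrFun hu' (Sum.inl i)
    simpa using this
  have hu3 : A₃₃ *ᵥ (u ∘ Sum.inr) = 0 := by
    funext i
    have := congrFun hu' (Sum.inr i)
    simpa using this
  set z := (A₂₁ *ᵥ (u ∘ Sum.inl)) 0 + (A₂₃ *ᵥ (u ∘ Sum.inr)) 0 with hzdef
  have hz0 : z ≠ 0 := by
    rw [← Sum.elim_comp_inl_inr u, Matrix.fromCols_mulVec_sumElim] at hz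
    intro h0
    apply hz
    funext i
    have : i = 0 := Subsingleton.elim i 0
    subst this
    simpa [Pi.add_apply] using h0
  have hc : ∀ y, (Fmap A₂₁ A₂₃ a₂₂ z u y) ⬝ᵥ (fromBlocks A₁₁ (fromCols A₂₁ᵀ 0)
      (fromRows A₂₁ 0) (fromBlocks (!![a₂₂]) A₂₃ A₂₃ᵀ A₃₃)) *ᵥ (Fmap A₂₁ A₂₃ a₂₂ z u y)
      = y ⬝ᵥ (fromBlocks (!![(0:ℝ), 1; 1, 0]) 0 0 (fromBlocks A₁₁ 0 0 A₃₃)) *ᵥ y :=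
    fun y => Fmap_compat A₁₁ A₃₃ A₂₁ A₂₃ a₂₂ h11 h33 u hu1 hu3 hz0 rfl y _
      (Fmap_apply_eq A₂₁ A₂₃ a₂₂ z u y)
  have hfirst : pin (fromBlocks A₁₁ (fromCols A₂₁ᵀ 0) (fromRows A₂₁ 0)
      (fromBlocks (!![a₂₂]) A₂₃ A₂₃ᵀ A₃₃))
      = pin (fromBlocks (!![(0:ℝ), 1; 1, 0]) 0 0 (fromBlocks A₁₁ 0 0 A₃₃)) :=
    pin_transfer hM hN (Fmap A₂₁ A₂₃ a₂₂ z u) (Fmap_surjective A₂₁ A₂₃ a₂₂ hz0 u) hc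
  refine ⟨hfirst, ?_⟩
  rw [hfirst, pin_fromBlocks isHermitian_H (isHermitian_fromBlocks h11h h33h),
    pin_fromBlocks h11h h33h, pin_H]
  simp only [Prod.mk.injEq]
  omega
end
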